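/- arXiv:1511.04271 — 15 statements merged into one kernel-verified Lean document; each statement's English description precedes it below -/
import Mathlib

section
/- Let C and D be complete lattices and f : C → D a monotone map. Then the map ◇_f is completely join-preserving (i.e. ◇_f(sSup S) = sSup (◇_f '' S) for every subset S of C, in particular ◇_f ⊥ = ⊥), ◇_f(u) ≤ f(u) for every u ∈ C, and ◇_f(j) = f(j) for every completely join-prime element j of C. (Lemma 4.5(1).) -/
/-- An element is completely join-prime. -/
def CJPrime {C : Type*} [CompleteLattice C] (j : C) : Prop :=
  j ≠ ⊥ ∧ ∀ S : Set C, j ≤ sSup S → ∃ s ∈ S, j ≤ s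

/-- An element is completely meet-prime. -/
def CMPrime {C : Type*} [CompleteLattice C] (m : C) : Prop :=
  m ≠ ⊤ ∧ ∀ S : Set C, sInf S ≤ m → ∃ s ∈ S, s ≤ m

/-- ◇_f(u) = ⋁ { f j | j completely join-prime, j ≤ u }. -/
def diam {C D : Type*} [CompleteLattice C] [CompleteLattice D]
    (f : C → D) (u : C) : D :=
  sSup (f '' {j | CJPrime j ∧ j ≤ u})

/-- ■_f(v) = ⋁ { j | j completely join-prime, f j ≤ v }. -/
def bsq {C D : Type*} [CompleteLattice C] [CompleteLattice D]
    (f : C → D) (v : D) : C :=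
  sSup {j | CJPrime j ∧ f j ≤ v}

/-- □_g(u) = ⋀ { g m | m completely meet-prime, u ≤ m }. -/
def boxg {C D : Type*} [CompleteLattice C] [CompleteLattice D]
    (g : C → D) (u : C) : D :=
  sInf (g '' {m | CMPrime m ∧ u ≤ m})

/-- ◆_g(v) = ⋀ { m | m completely meet-prime, v ≤ g m }. -/
def bdiam {C D : Type*} [CompleteLattice C] [CompleteLattice D]
    (g : C → D) (v : D) : C :=
  sInf {m | CMPrime m ∧ v ≤ g m}

/-- Every element is the sup of the completely join-primes below it. -/
def JoinPerfect (C : Type*) [CompleteLattice C] : Prop :=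
  ∀ u : C, u = sSup {j | CJPrime j ∧ j ≤ u}

/-- Every element is the inf of the completely meet-primes above it. -/
def MeetPerfect (C : Type*) [CompleteLattice C] : Prop :=
  ∀ u : C, u = sInf {m | CMPrime m ∧ u ≤ m}

/-- `(C, e)` is a canonical extension of the bounded distributive lattice `A`. -/
structure IsCanonicalExtension {A C : Type*} [DistribLattice A] [BoundedOrder A]
    [CompleteLattice C] (e : A → C) : Prop where
  injective : Function.Injective e
  map_bot : e ⊥ = ⊥
  map_top : e ⊤ = ⊤
  map_inf : ∀ a b : A, e (a ⊓ b) = e a ⊓ e b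
  map_sup : ∀ a b : A, e (a ⊔ b) = e a ⊔ e b
  dense_joinOfMeets : ∀ u : C, ∃ 𝒮 : Set (Set A),
      u = sSup ((fun S => sInf (e '' S)) '' 𝒮)
  dense_meetOfJoins : ∀ u : C, ∃ 𝒮 : Set (Set A),
      u = sInf ((fun S => sSup (e '' S)) '' 𝒮)
  compact : ∀ S T : Set A, sInf (e '' S) ≤ sSup (e '' T) →
      ∃ F : Finset A, ↑F ⊆ S ∧ ∃ G : Finset A, ↑G ⊆ T ∧ F.inf id ≤ G.sup id

/-- Closed elements of the canonical extension: meets of subsets of `e(A)`. -/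
def ClosedElem {A C : Type*} [CompleteLattice C] (e : A → C) (x : C) : Prop :=
  ∃ S : Set A, x = sInf (e '' S)

/-- Open elements of the canonical extension: joins of subsets of `e(A)`. -/
def OpenElem {A C : Type*} [CompleteLattice C] (e : A → C) (x : C) : Prop :=
  ∃ S : Set A, x = sSup (e '' S)

/-- Nonempty downward-directed family. -/
def DownDir {C : Type*} [Preorder C] (𝒞 : Set C) : Prop :=
  𝒞.Nonempty ∧ ∀ x ∈ 𝒞, ∀ y ∈ 𝒞, ∃ z ∈ 𝒞, z ≤ x ∧ z ≤ y

/-- Nonempty upward-directed family. -/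
def UpDir {C : Type*} [Preorder C] (𝒪 : Set C) : Prop :=
  𝒪.Nonempty ∧ ∀ x ∈ 𝒪, ∀ y ∈ 𝒪, ∃ z ∈ 𝒪, x ≤ z ∧ y ≤ z

/-- `h` preserves down-directed meets of closed elements. -/
def ClosedEsakia {A C D : Type*} [CompleteLattice C] [CompleteLattice D]
    (e : A → C) (h : C → D) : Prop :=
  ∀ 𝒞 : Set C, DownDir 𝒞 → (∀ c ∈ 𝒞, ClosedElem e c) →
    h (sInf 𝒞) = sInf (h '' 𝒞)

/-- `h` preserves up-directed joins of open elements. -/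
def OpenEsakia {A C D : Type*} [CompleteLattice C] [CompleteLattice D]
    (e : A → C) (h : C → D) : Prop :=
  ∀ 𝒪 : Set C, UpDir 𝒪 → (∀ o ∈ 𝒪, OpenElem e o) →
    h (sSup 𝒪) = sSup (h '' 𝒪)

/-- Lemma 4.5(1): `◇_f` is completely join-preserving (so in particular
`◇_f ⊥ = ⊥`), `◇_f u ≤ f u` for all `u`, and `◇_f j = f j` on completely
join-prime elements. -/
theorem stmt0 {C D : Type*} [CompleteLattice C] [CompleteLattice D]
    (f : C → D) (hf : Monotone f) :
    (∀ S : Set C, diam f (sSup S) = sSup (diam f '' S)) ∧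
    diam f (⊥ : C) = ⊥ ∧
    (∀ u : C, diam f u ≤ f u) ∧
    (∀ j : C, CJPrime j → diam f j = f j) := by
  have hmain : ∀ S : Set C, diam f (sSup S) = sSup (diam f '' S) := by
    intro S
    apply le_antisymm
    · apply sSup_le
      rintro d ⟨j, ⟨hj, hle⟩, rfl⟩
      obtain ⟨s, hs, hjs⟩ := hj.2 S hle
      calc f j ≤ diam f s := le_sSup ⟨j, ⟨hj, hjs⟩, rfl⟩
        _ ≤ sSup (diam f '' S) := le_sSup ⟨s, hs, rfl⟩
    · apply sSup_le
      rintro d ⟨s, hs, rfl⟩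
      apply sSup_le
      rintro d ⟨j, ⟨hj, hle⟩, rfl⟩
      exact le_sSup ⟨j, ⟨hj, hle.trans (le_sSup hs)⟩, rfl⟩
  refine ⟨hmain, ?_, ?_, ?_⟩
  · have := hmain ∅
    simpa using this
  · intro u
    apply sSup_le
    rintro d ⟨j, ⟨hj, hle⟩, rfl⟩
    exact hf hle
  · intro j hj
    apply le_antisymm
    · apply sSup_le
      rintro d ⟨k, ⟨hk, hle⟩, rfl⟩
      exact hf hle
    · exact le_sSup ⟨j, ⟨hj, le_rfl⟩, rfl⟩
end

section
/- Let C and D be complete lattices and g : C → D a monotone map. Then the map □_g is completely meet-preserving (i.e. □_g(sInf S) = sInf (□_g '' S) for every subset S of C, in particular □_g ⊤ = ⊤), g(u) ≤ □_g(u) for every u ∈ C, and □_g(m) = g(m) for every completely meet-prime element m of C. (Lemma 4.5(2).) -/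
/-- Lemma 4.5(2): `□_g` is completely meet-preserving (so in particular
`□_g ⊤ = ⊤`), `g u ≤ □_g u` for all `u`, and `□_g m = g m` on completely
meet-prime elements. -/
theorem stmt1 {C D : Type*} [CompleteLattice C] [CompleteLattice D]
    (g : C → D) (hg : Monotone g) :
    (∀ S : Set C, boxg g (sInf S) = sInf (boxg g '' S)) ∧
    boxg g (⊤ : C) = ⊤ ∧
    (∀ u : C, g u ≤ boxg g u) ∧
    (∀ m : C, CMPrime m → boxg g m = g m) := by
  have mono : Monotone (boxg g) := fun u v huv =>
    sInf_le_sInf (Set.image_mono (fun m hm => ⟨hm.1, le_trans huv hm.2⟩))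
  have hle : ∀ u : C, g u ≤ boxg g u := by
    intro u
    apply le_sInf
    rintro _ ⟨m, ⟨_, hum⟩, rfl⟩
    exact hg hum
  refine ⟨?_, ?_, hle, ?_⟩
  · intro S
    apply le_antisymm
    · exact le_sInf (by rintro _ ⟨s, hs, rfl⟩; exact mono (sInf_le hs))
    · apply le_sInf
      rintro _ ⟨m, ⟨hmP, hm⟩, rfl⟩
      obtain ⟨s, hsS, hsm⟩ := hmP.2 S hm
      calc sInf (boxg g '' S) ≤ boxg g s := sInf_le ⟨s, hsS, rfl⟩
        _ ≤ g m := sInf_le ⟨m, ⟨hmP, hsm⟩, rfl⟩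
  · have : {m : C | CMPrime m ∧ (⊤ : C) ≤ m} = ∅ := by
      ext m
      simp only [Set.mem_setOf_eq, Set.mem_empty_iff_false, iff_false, not_and]
      intro hP h
      exact hP.1 (top_le_iff.mp h)
    rw [boxg, this, Set.image_empty, sInf_empty]
  · intro m hm
    exact le_antisymm (sInf_le ⟨m, ⟨hm, le_rfl⟩, rfl⟩) (hle m)
end

section
/- Let C and D be complete lattices and f, g : C → D monotone maps. If C is join-perfect, then ◇_f and ■_f form a Galois connection: for all u ∈ C and v ∈ D, ◇_f(u) ≤ v if and only if u ≤ ■_f(v). Dually, if C is meet-perfect, then ◆_g and □_g form a Galois connection: for all u ∈ C and v ∈ D, ◆_g(v) ≤ u if and only if v ≤ □_g(u). (Adjunction between ◇_f and ■_f, and between ◆_g and □_g, established in the proof of Proposition 3.6 and used throughout Section 4.) -/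
/-- Adjunctions: if `C` is join-perfect, `◇_f ⊣ ■_f`; if `C` is meet-perfect,
`◆_g ⊣ □_g`. -/
theorem stmt3 {C D : Type*} [CompleteLattice C] [CompleteLattice D]
    (f g : C → D) (hf : Monotone f) (hg : Monotone g) :
    (JoinPerfect C → ∀ (u : C) (v : D), diam f u ≤ v ↔ u ≤ bsq f v) ∧
    (MeetPerfect C → ∀ (u : C) (v : D), bdiam g v ≤ u ↔ v ≤ boxg g u) := by
  constructor
  · intro hJ u v
    constructor
    · intro h
      calc u = sSup {j | CJPrime j ∧ j ≤ u} := hJ u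
        _ ≤ bsq f v := by
          apply sSup_le_sSup
          rintro j ⟨hj, hju⟩
          refine ⟨hj, le_trans ?_ h⟩
          exact le_sSup (Set.mem_image_of_mem f ⟨hj, hju⟩)
    · intro h
      apply sSup_le
      rintro x ⟨j, ⟨hj, hju⟩, rfl⟩
      obtain ⟨j', ⟨hj', hfj'⟩, hle⟩ := hj.2 _ (le_trans hju h)
      exact le_trans (hf hle) hfj'
  · intro hM u v
    constructor
    · intro h
      apply le_sInf
      rintro x ⟨m, ⟨hm, hum⟩, rfl⟩
      obtain ⟨m', ⟨hm', hvm'⟩, hle⟩ := hm.2 _ (le_trans h hum)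
      exact le_trans hvm' (hg hle)
    · intro h
      calc bdiam g v ≤ sInf {m | CMPrime m ∧ u ≤ m} := by
            apply sInf_le_sInf
            rintro m ⟨hm, hum⟩
            refine ⟨hm, le_trans h ?_⟩
            exact sInf_le (Set.mem_image_of_mem g ⟨hm, hum⟩)
        _ = u := (hM u).symm
end

section
/- Let (C, e) be a canonical extension of a bounded distributive lattice A with C join-perfect, and let f : C → C be a monotone, closed Esakia map such that f(e a) is closed in C for every a ∈ A and f(e (a ⊔ b)) ≤ f(e a) ⊔ f(e b) for all a, b ∈ A. Then f(e a) = ◇_f(e a) ⊔ f(⊥) for every a ∈ A. (Lemma 3.7, order-theoretic form.) -/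
section Aux

variable {A C : Type*} [DistribLattice A] [BoundedOrder A] [CompleteLattice C]
  {e : A → C}

lemma aux_emono (hce : IsCanonicalExtension e) : Monotone e := by
  intro a b hab
  have h : e a = e a ⊓ e b := by rw [← hce.map_inf, inf_eq_left.mpr hab]
  rw [h]; exact inf_le_right

lemma aux_e_closed (t : A) : ClosedElem e (e t) :=
  ⟨{t}, by simp⟩

lemma aux_closed_sInf (𝒞 : Set C) (h : ∀ c ∈ 𝒞, ClosedElem e c) :
    ClosedElem e (sInf 𝒞) := by
  choose S hS using h
  refine ⟨⋃ (c : C) (hc : c ∈ 𝒞), S c hc, le_antisymm ?_ ?_⟩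
  · refine le_sInf ?_
    rintro x ⟨t, ht, rfl⟩
    simp only [Set.mem_iUnion] at ht
    obtain ⟨c, hc, htc⟩ := ht
    exact (sInf_le hc).trans ((hS c hc) ▸ sInf_le ⟨t, htc, rfl⟩)
  · refine le_sInf fun c hc => ?_
    rw [hS c hc]
    refine le_sInf ?_
    rintro x ⟨t, ht, rfl⟩
    exact sInf_le ⟨t, Set.mem_iUnion.mpr ⟨c, Set.mem_iUnion.mpr ⟨hc, ht⟩⟩, rfl⟩

lemma aux_le_inf (hce : IsCanonicalExtension e) (c : C) (F₀ : Finset A)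
    (h : ∀ b ∈ F₀, c ≤ e b) : c ≤ e (F₀.inf id) := by
  classical
  induction F₀ using Finset.induction_on with
  | empty => simpa [hce.map_top] using le_top (a := c)
  | @insert a s ha ih =>
      rw [Finset.inf_insert, hce.map_inf]
      exact le_inf (h a (Finset.mem_insert_self a s))
        (ih fun b hb => h b (Finset.mem_insert_of_mem hb))

lemma aux_sup_prime (hce : IsCanonicalExtension e) (c : C) (hbot : c ≠ ⊥)
    (hp : ∀ b₁ b₂ : A, c ≤ e (b₁ ⊔ b₂) → c ≤ e b₁ ∨ c ≤ e b₂)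
    (G₀ : Finset A) (h : c ≤ e (G₀.sup id)) : ∃ g ∈ G₀, c ≤ e g := by
  classical
  induction G₀ using Finset.induction_on with
  | empty =>
      rw [Finset.sup_empty] at h
      exact absurd (le_bot_iff.mp (h.trans_eq hce.map_bot)) hbot
  | @insert a s ha ih =>
      rw [Finset.sup_insert] at h
      rcases hp _ _ h with h1 | h2
      · exact ⟨a, Finset.mem_insert_self a s, h1⟩
      · obtain ⟨g, hg, hcg⟩ := ih h2
        exact ⟨g, Finset.mem_insert_of_mem hg, hcg⟩

/-- A nonbottom closed element whose trace filter is prime is completely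
join-prime. -/
lemma aux_cjprime (hce : IsCanonicalExtension e) (c : C) (hcl : ClosedElem e c)
    (hbot : c ≠ ⊥)
    (hp : ∀ b₁ b₂ : A, c ≤ e (b₁ ⊔ b₂) → c ≤ e b₁ ∨ c ≤ e b₂) : CJPrime c := by
  refine ⟨hbot, fun S hS => ?_⟩
  by_contra hno
  push_neg at hno
  set F : Set A := {b | c ≤ e b} with hF
  have hcF : c = sInf (e '' F) := by
    obtain ⟨S₀, hS₀⟩ := hcl
    refine le_antisymm (le_sInf ?_) ?_
    · rintro x ⟨b, hb, rfl⟩; exact hb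
    · have hsub : S₀ ⊆ F := fun b hb => le_of_eq_of_le hS₀ (sInf_le ⟨b, hb, rfl⟩)
      calc sInf (e '' F) ≤ sInf (e '' S₀) :=
            sInf_le_sInf (Set.image_mono (f := e) hsub)
        _ = c := hS₀.symm
  set T : Set A := {b | ¬ c ≤ e b} with hT
  have hST : sSup S ≤ sSup (e '' T) := by
    refine sSup_le fun s hs => ?_
    obtain ⟨𝒮, h𝒮⟩ := hce.dense_joinOfMeets s
    rw [h𝒮]
    refine sSup_le ?_
    rintro k ⟨Sk, hSk, rfl⟩
    have hnk : ¬ c ≤ sInf (e '' Sk) := fun hck =>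
      hno s hs (hck.trans (by rw [h𝒮]; exact le_sSup ⟨Sk, hSk, rfl⟩))
    have hex : ∃ b ∈ Sk, ¬ c ≤ e b := by
      by_contra hb
      push_neg at hb
      exact hnk (le_sInf (by rintro x ⟨b, hbS, rfl⟩; exact hb b hbS))
    obtain ⟨b, hbSk, hbn⟩ := hex
    exact le_trans (sInf_le ⟨b, hbSk, rfl⟩) (le_sSup ⟨b, hbn, rfl⟩)
  obtain ⟨F₀, hF₀, G₀, hG₀, hle⟩ := hce.compact F T (hcF ▸ (hS.trans hST))
  have h1 : c ≤ e (F₀.inf id) := aux_le_inf hce c F₀ fun b hb => hF₀ hb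
  have h2 : c ≤ e (G₀.sup id) := h1.trans (aux_emono hce hle)
  obtain ⟨g, hg, hcg⟩ := aux_sup_prime hce c hbot hp G₀ h2
  exact (hG₀ hg) hcg

lemma aux_zorn {α : Type*} [PartialOrder α] (s : Set α)
    (H : ∀ c ⊆ s, IsChain (· ≤ ·) c → ∀ y ∈ c, ∃ lb ∈ s, ∀ z ∈ c, lb ≤ z)
    (x : α) (hx : x ∈ s) : ∃ m ∈ s, ∀ z ∈ s, z ≤ m → z = m := by
  obtain ⟨m, -, hm⟩ := zorn_le_nonempty₀ (α := αᵒᵈ) s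
    (fun c hc hchain y hy => by
      obtain ⟨lb, hlb, h⟩ := H c hc hchain.symm y hy
      exact ⟨lb, hlb, h⟩) x hx
  exact ⟨m, hm.1, fun z hz hzm => le_antisymm hzm (hm.2 hz hzm)⟩

end Aux

/-- Lemma 3.7 (order-theoretic form): for a monotone closed-Esakia map `f` on
the canonical extension of `A`, with `f(e a)` closed and `f` additive on `A`,
one has `f (e a) = ◇_f (e a) ⊔ f ⊥` for every `a ∈ A`. -/
theorem stmt4 {A C : Type*} [DistribLattice A] [BoundedOrder A] [CompleteLattice C]
    (e : A → C) (hce : IsCanonicalExtension e) (hCj : JoinPerfect C)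
    (f : C → C) (hf : Monotone f) (hfEs : ClosedEsakia e f)
    (hcl : ∀ a : A, ClosedElem e (f (e a)))
    (hadd : ∀ a b : A, f (e (a ⊔ b)) ≤ f (e a) ⊔ f (e b)) :
    ∀ a : A, f (e a) = diam f (e a) ⊔ f ⊥ := by
  intro a
  refine le_antisymm ?_ (sup_le (sSup_le ?_) (hf bot_le))
  swap
  · rintro x ⟨j, ⟨-, hja⟩, rfl⟩; exact hf hja
  have hemono : Monotone e := aux_emono hce
  conv_lhs => rw [hCj (f (e a))]
  refine sSup_le ?_
  rintro p ⟨hpj, hpfa⟩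
  by_cases hpbot : p ≤ f ⊥
  · exact le_sup_of_le_right hpbot
  -- Zorn: a minimal closed c ≤ e a with p ≤ f c
  set P : Set C := {c | ClosedElem e c ∧ c ≤ e a ∧ p ≤ f c} with hPdef
  have heaP : e a ∈ P := ⟨aux_e_closed a, le_refl _, hpfa⟩
  have hchain : ∀ 𝒞 ⊆ P, IsChain (· ≤ ·) 𝒞 → ∀ y ∈ 𝒞, ∃ lb ∈ P, ∀ z ∈ 𝒞, lb ≤ z := by
    intro 𝒞 h𝒞P hch y hy
    have hdd : DownDir 𝒞 := by
      refine ⟨⟨y, hy⟩, fun x hx y' hy' => ?_⟩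
      rcases hch.total hx hy' with h | h
      exacts [⟨x, hx, le_refl _, h⟩, ⟨y', hy', h, le_refl _⟩]
    refine ⟨sInf 𝒞, ⟨aux_closed_sInf 𝒞 fun c hc => (h𝒞P hc).1,
      (sInf_le hy).trans (h𝒞P hy).2.1, ?_⟩, fun z hz => sInf_le hz⟩
    rw [hfEs 𝒞 hdd fun c hc => (h𝒞P hc).1]
    refine le_sInf ?_
    rintro x ⟨cz, hcz, rfl⟩
    exact (h𝒞P hcz).2.2
  obtain ⟨c, hcP, hmin⟩ := aux_zorn P hchain (e a) heaP
  obtain ⟨hccl, hcea, hpfc⟩ := hcP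
  have hcbot : c ≠ ⊥ := fun h => hpbot (h ▸ hpfc)
  -- the trace filter of c
  set F : Set A := {b | c ≤ e b} with hFdef
  have hcF : c = sInf (e '' F) := by
    obtain ⟨S₀, hS₀⟩ := hccl
    refine le_antisymm (le_sInf ?_) ?_
    · rintro x ⟨b, hb, rfl⟩; exact hb
    · have hsub : S₀ ⊆ F := fun b hb => le_of_eq_of_le hS₀ (sInf_le ⟨b, hb, rfl⟩)
      calc sInf (e '' F) ≤ sInf (e '' S₀) := sInf_le_sInf (Set.image_mono (f := e) hsub)
        _ = c := hS₀.symm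
  have htopF : (⊤ : A) ∈ F := by
    show c ≤ e ⊤; rw [hce.map_top]; exact le_top
  have hinfF : ∀ b ∈ F, ∀ d ∈ F, b ⊓ d ∈ F := by
    intro b hb d hd
    show c ≤ e (b ⊓ d)
    rw [hce.map_inf]; exact le_inf hb hd
  -- key step: the minimal c cannot avoid e x if a cofinal part of F works for x
  have key : ∀ x : A, ¬ c ≤ e x →
      (∀ b ∈ F, ∃ b' ∈ F, b' ≤ b ∧ p ≤ f (e (b' ⊓ x))) → False := by
    intro x hnx hQ
    set F₁ : Set A := {b | b ∈ F ∧ p ≤ f (e (b ⊓ x))} with hF₁def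
    set G : Set A := (fun b => b ⊓ x) '' F₁ with hGdef
    obtain ⟨b₀, hb₀F, -, hb₀p⟩ := hQ ⊤ htopF
    have hb₀F₁ : b₀ ∈ F₁ := ⟨hb₀F, hb₀p⟩
    have hdd : DownDir (e '' G) := by
      constructor
      · exact ⟨e (b₀ ⊓ x), ⟨b₀ ⊓ x, ⟨b₀, hb₀F₁, rfl⟩, rfl⟩⟩
      · rintro u ⟨-, ⟨b, hb, rfl⟩, rfl⟩ v ⟨-, ⟨d, hd, rfl⟩, rfl⟩
        obtain ⟨b', hb'F, hb'le, hb'p⟩ := hQ (b ⊓ d) (hinfF b hb.1 d hd.1)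
        refine ⟨e (b' ⊓ x), ⟨b' ⊓ x, ⟨b', ⟨hb'F, hb'p⟩, rfl⟩, rfl⟩, ?_, ?_⟩
        · exact hemono (inf_le_inf_right x (hb'le.trans inf_le_left))
        · exact hemono (inf_le_inf_right x (hb'le.trans inf_le_right))
    have hGclosed : ∀ u ∈ e '' G, ClosedElem e u := by
      rintro u ⟨t, -, rfl⟩; exact aux_e_closed t
    have hinfG : sInf (e '' G) = c ⊓ e x := by
      refine le_antisymm (le_inf ?_ ?_) (le_sInf ?_)
      · rw [hcF]
        refine le_sInf ?_
        rintro u ⟨b, hb, rfl⟩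
        obtain ⟨b', hb'F, hb'le, hb'p⟩ := hQ b hb
        have hmem : e (b' ⊓ x) ∈ e '' G := ⟨b' ⊓ x, ⟨b', ⟨hb'F, hb'p⟩, rfl⟩, rfl⟩
        exact (sInf_le hmem).trans (hemono (inf_le_left.trans hb'le))
      · have hmem : e (b₀ ⊓ x) ∈ e '' G := ⟨b₀ ⊓ x, ⟨b₀, hb₀F₁, rfl⟩, rfl⟩
        exact (sInf_le hmem).trans (hemono inf_le_right)
      · rintro u ⟨-, ⟨b, hb, rfl⟩, rfl⟩
        rw [hce.map_inf]
        exact inf_le_inf hb.1 (le_refl _)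
    have hmem : c ⊓ e x ∈ P := by
      refine ⟨?_, inf_le_left.trans hcea, ?_⟩
      · rw [← hinfG]; exact ⟨G, rfl⟩
      · rw [← hinfG, hfEs (e '' G) hdd hGclosed]
        refine le_sInf ?_
        rintro u ⟨-, ⟨-, ⟨b, hb, rfl⟩, rfl⟩, rfl⟩
        exact hb.2
    exact hnx (inf_eq_left.mp (hmin _ hmem inf_le_left))
  -- primeness of the trace filter
  have hprime : ∀ b₁ b₂ : A, c ≤ e (b₁ ⊔ b₂) → c ≤ e b₁ ∨ c ≤ e b₂ := by
    intro b₁ b₂ hcb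
    by_contra hn
    push_neg at hn
    obtain ⟨hn₁, hn₂⟩ := hn
    have dich : ∀ b ∈ F, p ≤ f (e (b ⊓ b₁)) ∨ p ≤ f (e (b ⊓ b₂)) := by
      intro b hb
      have h1 : c ≤ e ((b ⊓ b₁) ⊔ (b ⊓ b₂)) := by
        rw [← inf_sup_left, hce.map_inf]
        exact le_inf hb hcb
      have h2 : p ≤ f (e (b ⊓ b₁)) ⊔ f (e (b ⊓ b₂)) :=
        hpfc.trans ((hf h1).trans (hadd _ _))
      obtain ⟨s, hs, hps⟩ := hpj.2 {f (e (b ⊓ b₁)), f (e (b ⊓ b₂))}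
        (by rwa [sSup_pair])
      simp only [Set.mem_insert_iff, Set.mem_singleton_iff] at hs
      rcases hs with rfl | rfl
      exacts [Or.inl hps, Or.inr hps]
    by_cases hQ1 : ∀ b ∈ F, ∃ b' ∈ F, b' ≤ b ∧ p ≤ f (e (b' ⊓ b₁))
    · exact key b₁ hn₁ hQ1
    · push_neg at hQ1
      obtain ⟨b, hbF, hb⟩ := hQ1
      refine key b₂ hn₂ fun d hdF => ?_
      have hbd : b ⊓ d ∈ F := hinfF b hbF d hdF
      rcases dich (b ⊓ d) hbd with h | h
      · exact absurd h (hb (b ⊓ d) hbd inf_le_left)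
      · exact ⟨b ⊓ d, hbd, inf_le_right, h⟩
  have hcj : CJPrime c := aux_cjprime hce c hccl hcbot hprime
  have hdle : f c ≤ diam f (e a) := le_sSup ⟨c, ⟨hcj, hcea⟩, rfl⟩
  exact le_sup_of_le_left (hpfc.trans hdle)
end

section
/- Under the standing hypotheses on f, for every closed element k of C it holds that f(k) = f(⊥) ⊔ ◇_f(k). (Proposition 4.9(1).) -/
section MyAux

variable {A C : Type*} [DistribLattice A] [BoundedOrder A] [CompleteLattice C]

lemma myEA_mono {eA : A → C} (h : ∀ a b : A, eA (a ⊓ b) = eA a ⊓ eA b) :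
    Monotone eA := fun a b hab => by
  have h' : eA (a ⊓ b) = eA a ⊓ eA b := h a b
  rw [inf_eq_left.mpr hab] at h'
  exact h'.le.trans inf_le_right

/-- The completely join-prime element of `C` attached to a "prime filter" `F ⊆ A`. -/
lemma myCJP {eA : A → C} (hceA : IsCanonicalExtension eA) (F : Set A)
    (hFtop : (⊤ : A) ∈ F) (hFbot : (⊥ : A) ∉ F)
    (hFup : ∀ {a b : A}, a ≤ b → a ∈ F → b ∈ F)
    (hFinf : ∀ {a b : A}, a ∈ F → b ∈ F → a ⊓ b ∈ F)
    (hFprime : ∀ {a b : A}, a ⊔ b ∈ F → a ∈ F ∨ b ∈ F) :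
    CJPrime (sInf (eA '' F)) := by
  set j := sInf (eA '' F) with hj
  set m := sSup (eA '' Fᶜ) with hm
  -- j is not below m, by compactness
  have hjm : ¬ j ≤ m := by
    intro hle
    obtain ⟨G, hGF, H, hHFc, hGH⟩ := hceA.compact F Fᶜ hle
    have hGmem : ∀ G' : Finset A, ↑G' ⊆ F → G'.inf id ∈ F := by
      classical
      intro G'
      induction G' using Finset.induction with
      | empty => intro _; simpa using hFtop
      | @insert a s hx ih =>
        intro hsub
        rw [Finset.inf_insert]
        refine hFinf (hsub (by simp)) (ih ?_)
        intro x hxs; exact hsub (by simp [hxs])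
    have hsup : H.sup id ∈ F := hFup hGH (hGmem G hGF)
    -- but sup of elements of Fᶜ is not in F
    have : ∀ H' : Finset A, ↑H' ⊆ Fᶜ → H'.sup id ∉ F := by
      classical
      intro H'
      induction H' using Finset.induction with
      | empty => intro _ hmem; exact hFbot (by simpa using hmem)
      | @insert a s hx ih =>
        intro hsub hmem
        rw [Finset.sup_insert] at hmem
        rcases hFprime hmem with h1 | h1
        · exact hsub (by simp) h1
        · exact ih (fun x hxs => hsub (by simp [hxs])) h1
    exact this H hHFc hsup
  -- dichotomy: every x is either above j or below m
  have dich : ∀ x : C, j ≤ x ∨ x ≤ m := by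
    intro x
    obtain ⟨𝒮, h𝒮⟩ := hceA.dense_joinOfMeets x
    by_cases hall : ∀ S ∈ 𝒮, sInf (eA '' S) ≤ m
    · right
      rw [h𝒮]
      refine sSup_le ?_
      rintro y ⟨S, hS, rfl⟩
      exact hall S hS
    · left
      push_neg at hall
      obtain ⟨S, hS𝒮, hSm⟩ := hall
      have hSF : S ⊆ F := by
        intro a haS
        by_contra haF
        exact hSm ((sInf_le (Set.mem_image_of_mem eA haS)).trans (le_sSup (Set.mem_image_of_mem eA haF)))
      have h1 : j ≤ sInf (eA '' S) :=
        sInf_le_sInf (Set.image_mono hSF)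
      have h2 : sInf (eA '' S) ≤ x := by
        rw [h𝒮]; exact le_sSup ⟨S, hS𝒮, rfl⟩
      exact h1.trans h2
  constructor
  · intro hbot
    exact hjm (hbot ▸ bot_le)
  · intro Z hZ
    by_contra hno
    push_neg at hno
    have : sSup Z ≤ m := sSup_le fun z hz =>
      (dich z).resolve_left (fun h => hno z hz h)
    exact hjm (hZ.trans this)

end MyAux

/-- Proposition 4.9(1): under the standing hypotheses on `f`,
`f k = f ⊥ ⊔ ◇_f k` for every closed `k`. -/
theorem stmt5 {A B C D : Type*} [DistribLattice A] [BoundedOrder A]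
    [DistribLattice B] [BoundedOrder B] [CompleteLattice C] [CompleteLattice D]
    (eA : A → C) (eB : B → D)
    (hceA : IsCanonicalExtension eA) (hceB : IsCanonicalExtension eB)
    (hCj : JoinPerfect C) (hCm : MeetPerfect C)
    (hDj : JoinPerfect D) (hDm : MeetPerfect D)
    (f : C → D) (hf : Monotone f)
    (hfcE : ClosedEsakia eA f) (hfoE : OpenEsakia eA f)
    (hcl : ∀ a : A, ClosedElem eB (f (eA a)))
    (hadd : ∀ a b : A, f (eA (a ⊔ b)) ≤ f (eA a) ⊔ f (eA b)) :
    ∀ k : C, ClosedElem eA k → f k = f ⊥ ⊔ diam f k := by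
  classical
  rintro k ⟨S₀, rfl⟩
  set k := sInf (eA '' S₀) with hk
  apply le_antisymm
  swap
  · -- easy direction
    refine sup_le (hf bot_le) (sSup_le ?_)
    rintro y ⟨j, ⟨_, hjk⟩, rfl⟩
    exact hf hjk
  -- hard direction
  conv_lhs => rw [hDj (f k)]
  refine sSup_le ?_
  rintro p ⟨hp, hpfk⟩
  by_cases hpbot : p ≤ f ⊥
  · exact le_sup_of_le_left hpbot
  -- set of "good" lattice elements
  set T : Set A := {a | p ≤ f (eA a)} with hT
  have hTup : ∀ {a b : A}, a ≤ b → a ∈ T → b ∈ T := by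
    intro a b hab ha
    exact ha.trans (hf (myEA_mono hceA.map_inf hab))
  -- the complement of T is an ideal
  have hI₀ : Order.IsIdeal Tᶜ := by
    constructor
    · intro a b hba ha hbT
      exact ha (hTup hba hbT)
    · exact ⟨⊥, by simp [hT, hceA.map_bot, hpbot]⟩
    · intro a ha b hb
      refine ⟨a ⊔ b, ?_, le_sup_left, le_sup_right⟩
      intro hmem
      have := hmem.trans (hadd a b)
      rcases hp.2 {f (eA a), f (eA b)} (by rwa [sSup_pair]) with ⟨s, hs, hps⟩
      rcases hs with rfl | rfl
      · exact ha hps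
      · exact hb hps
  -- the filter generated by S₀
  set F₀ : Set A := {a | ∃ G : Finset A, ↑G ⊆ S₀ ∧ G.inf id ≤ a} with hF₀
  have hkle : ∀ G : Finset A, ↑G ⊆ S₀ → k ≤ eA (G.inf id) := by
    intro G
    induction G using Finset.induction with
    | empty => intro _; simp [hceA.map_top]
    | @insert a s hx ih =>
      intro hsub
      rw [Finset.inf_insert, hceA.map_inf]
      refine le_inf (sInf_le (Set.mem_image_of_mem eA (hsub (by simp)))) (ih ?_)
      intro x hxs; exact hsub (by simp [hxs])
  have hF₀T : F₀ ⊆ T := by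
    rintro a ⟨G, hGS, hGa⟩
    have : k ≤ eA a := (hkle G hGS).trans (myEA_mono hceA.map_inf hGa)
    exact hpfk.trans (hf this)
  have hPF : Order.IsPFilter F₀ := by
    refine Order.IsPFilter.of_def ⟨⊤, ∅, by simp⟩ ?_ ?_
    · rintro a ⟨G, hGS, hGa⟩ b ⟨H, hHS, hHb⟩
      refine ⟨a ⊓ b, ⟨G ∪ H, ?_, ?_⟩, inf_le_left, inf_le_right⟩
      · rw [Finset.coe_union]; exact Set.union_subset hGS hHS
      · rw [Finset.inf_union]
        exact le_inf (inf_le_left.trans hGa) (inf_le_right.trans hHb)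
    · rintro a b hab ⟨G, hGS, hGa⟩
      exact ⟨G, hGS, hGa.trans hab⟩
  -- separation
  obtain ⟨J, hJprime, hIJ, hdisj⟩ :=
    DistribLattice.prime_ideal_of_disjoint_filter_ideal
      (F := hPF.toPFilter) (I := hI₀.toIdeal)
      (Set.disjoint_left.mpr fun a ha hac => hac (hF₀T ha))
  set F : Set A := (↑J : Set A)ᶜ with hF
  have hFJ : ∀ a : A, a ∈ F ↔ a ∉ J := fun a => Iff.rfl
  have hF₀F : F₀ ⊆ F := fun a ha hmem =>
    Set.disjoint_left.mp hdisj ha hmem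
  have hFT : F ⊆ T := by
    intro a ha
    by_contra haT
    exact ha (hIJ haT)
  have hFtop : (⊤ : A) ∈ F := hF₀F ⟨∅, by simp⟩
  have hFbot : (⊥ : A) ∉ F := fun h => h J.bot_mem
  have hFup : ∀ {a b : A}, a ≤ b → a ∈ F → b ∈ F := by
    intro a b hab ha hb
    exact ha (J.lower hab hb)
  have hFinf : ∀ {a b : A}, a ∈ F → b ∈ F → a ⊓ b ∈ F := by
    intro a b ha hb hmem
    rcases hJprime.mem_or_mem hmem with h | h
    · exact ha h
    · exact hb h
  have hFprime : ∀ {a b : A}, a ⊔ b ∈ F → a ∈ F ∨ b ∈ F := by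
    intro a b hab
    by_contra hcon
    push_neg at hcon
    have ha : a ∈ J := not_not.mp (fun h => hcon.1 h)
    have hb : b ∈ J := not_not.mp (fun h => hcon.2 h)
    exact hab (J.sup_mem ha hb)
  -- the completely join-prime j
  set j : C := sInf (eA '' F) with hjdef
  have hjCJP : CJPrime j := myCJP hceA F hFtop hFbot hFup hFinf hFprime
  have hjk : j ≤ k := by
    refine sInf_le_sInf (Set.image_mono ?_)
    intro a haS
    exact hF₀F ⟨{a}, by simpa using haS, by simp⟩
  -- p ≤ f j
  have hpfj : p ≤ f j := by
    have hDD : DownDir (eA '' F) := by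
      refine ⟨⟨eA ⊤, ⟨⊤, hFtop, rfl⟩⟩, ?_⟩
      rintro x ⟨a, ha, rfl⟩ y ⟨b, hb, rfl⟩
      refine ⟨eA (a ⊓ b), ⟨a ⊓ b, hFinf ha hb, rfl⟩, ?_, ?_⟩
      · rw [hceA.map_inf]; exact inf_le_left
      · rw [hceA.map_inf]; exact inf_le_right
    have hCl : ∀ c ∈ eA '' F, ClosedElem eA c := by
      rintro c ⟨a, _, rfl⟩
      exact ⟨{a}, by simp⟩
    rw [hjdef, hfcE (eA '' F) hDD hCl]
    refine le_sInf ?_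
    rintro y ⟨x, ⟨a, ha, rfl⟩, rfl⟩
    exact hFT ha
  have : f j ≤ diam f k := le_sSup ⟨j, ⟨hjCJP, hjk⟩, rfl⟩
  exact le_sup_of_le_right (hpfj.trans this)
end

section
/- Under the standing hypotheses on g, for every open element o of C it holds that g(o) = g(⊤) ⊓ □_g(o). (Proposition 4.9(2).) -/
/-- Proposition 4.9(2): under the standing hypotheses on `g`,
`g o = g ⊤ ⊓ □_g o` for every open `o`. -/
theorem stmt6 {A B C D : Type*} [DistribLattice A] [BoundedOrder A]
    [DistribLattice B] [BoundedOrder B] [CompleteLattice C] [CompleteLattice D]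
    (eA : A → C) (eB : B → D)
    (hceA : IsCanonicalExtension eA) (hceB : IsCanonicalExtension eB)
    (hCj : JoinPerfect C) (hCm : MeetPerfect C)
    (hDj : JoinPerfect D) (hDm : MeetPerfect D)
    (g : C → D) (hg : Monotone g)
    (hgcE : ClosedEsakia eA g) (hgoE : OpenEsakia eA g)
    (hop : ∀ a : A, OpenElem eB (g (eA a)))
    (hmul : ∀ a b : A, g (eA a) ⊓ g (eA b) ≤ g (eA (a ⊓ b))) :
    ∀ o : C, OpenElem eA o → g o = g ⊤ ⊓ boxg g o := by
  classical
  intro o ho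
  obtain ⟨S, hS⟩ := ho
  have heAmono : Monotone eA := by
    intro a b hab
    have h1 : eA (a ⊓ b) = eA a ⊓ eA b := hceA.map_inf a b
    rw [inf_eq_left.mpr hab] at h1
    exact h1.le.trans inf_le_right
  have hfin_sup : ∀ (G : Finset A) (Sx : Set A), ↑G ⊆ Sx →
      eA (G.sup id) ≤ sSup (eA '' Sx) := by
    intro G
    induction G using Finset.induction_on with
    | empty => intro Sx _; simp [hceA.map_bot]
    | @insert a s _ ih =>
      intro Sx hsub
      have : eA ((insert a s).sup id) = eA a ⊔ eA (s.sup id) := by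
        rw [Finset.sup_insert, hceA.map_sup]; rfl
      rw [this]
      refine sup_le (le_sSup ⟨_, hsub (Finset.mem_insert_self _ _), rfl⟩)
        (ih _ fun y hy => hsub (Finset.mem_insert_of_mem hy))
  -- easy direction
  have easy : g o ≤ g ⊤ ⊓ boxg g o := by
    refine le_inf (hg le_top) (le_sInf ?_)
    rintro x ⟨m, ⟨_, hom⟩, rfl⟩
    exact hg hom
  refine le_antisymm easy ?_
  have hgo : g o = sInf {n : D | CMPrime n ∧ g o ≤ n} := hDm (g o)
  rw [hgo]
  refine le_sInf ?_
  rintro n ⟨hn, hgon⟩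
  by_cases hgt : g ⊤ ≤ n
  · exact le_trans inf_le_left hgt
  set T : Set A := {a | ¬ g (eA a) ≤ n} with hT
  have hTtop : (⊤ : A) ∈ T := by
    show ¬ g (eA ⊤) ≤ n
    rw [hceA.map_top]; exact hgt
  have hTinf : ∀ a ∈ T, ∀ b ∈ T, a ⊓ b ∈ T := by
    intro a ha b hb hab
    have h2 : g (eA a) ⊓ g (eA b) ≤ n := le_trans (hmul a b) hab
    have h3 : sInf {g (eA a), g (eA b)} ≤ n := by rw [sInf_pair]; exact h2
    obtain ⟨x, hx, hxn⟩ := hn.2 _ h3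
    rcases hx with rfl | hx
    · exact ha hxn
    · rw [Set.mem_singleton_iff] at hx; rw [hx] at hxn; exact hb hxn
  have hTfin : ∀ F : Finset A, ↑F ⊆ T → F.inf id ∈ T := by
    intro F
    induction F using Finset.induction_on with
    | empty => intro _; simpa using hTtop
    | @insert a s _ ih =>
      intro hsub
      have hi : (insert a s).inf id = a ⊓ s.inf id := by
        rw [Finset.inf_insert]; rfl
      rw [hi]
      exact hTinf a (hsub (Finset.mem_insert_self _ _)) _
        (ih fun y hy => hsub (Finset.mem_insert_of_mem hy))
  -- the closed element sInf (eA '' T) is not below o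
  have hco : ¬ sInf (eA '' T) ≤ o := by
    intro hle
    rw [hS] at hle
    obtain ⟨F, hF, G, hG, hFG⟩ := hceA.compact T S hle
    have haT : F.inf id ∈ T := hTfin F hF
    have h1 : eA (F.inf id) ≤ eA (G.sup id) := heAmono hFG
    have h2 : eA (G.sup id) ≤ sSup (eA '' S) := hfin_sup G S hG
    have h3 : g (eA (F.inf id)) ≤ n :=
      le_trans (hg ((h1.trans h2).trans hS.ge)) hgon
    exact haT h3
  -- pick a completely meet-prime m above o with sInf (eA '' T) ≰ m
  have hoeq := hCm o
  have hnot : ¬ sInf (eA '' T) ≤ sInf {m : C | CMPrime m ∧ o ≤ m} := by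
    rw [← hoeq]; exact hco
  obtain ⟨m, hm, hcm⟩ : ∃ m ∈ {m : C | CMPrime m ∧ o ≤ m},
      ¬ sInf (eA '' T) ≤ m := by
    by_contra h
    push_neg at h
    exact hnot (le_sInf h)
  -- m is open
  obtain ⟨Sm, hSm⟩ : OpenElem eA m := by
    obtain ⟨𝒮, h𝒮⟩ := hceA.dense_meetOfJoins m
    obtain ⟨x, hx, hxm⟩ := hm.1.2 _ h𝒮.ge
    obtain ⟨Sx, hSx, rfl⟩ := hx
    refine ⟨Sx, le_antisymm ?_ hxm⟩
    rw [h𝒮]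
    exact sInf_le ⟨Sx, hSx, rfl⟩
  -- directed decomposition of m into finite joins
  set 𝒪 : Set C := {x | ∃ F : Finset A, ↑F ⊆ Sm ∧ x = eA (F.sup id)} with h𝒪
  have hdir : UpDir 𝒪 := by
    constructor
    · exact ⟨eA ((∅ : Finset A).sup id), ∅, by simp, rfl⟩
    · rintro x ⟨F, hF, rfl⟩ y ⟨G, hG, rfl⟩
      refine ⟨eA ((F ∪ G).sup id), ⟨F ∪ G, ?_, rfl⟩, heAmono ?_, heAmono ?_⟩
      · intro a ha
        rcases Finset.mem_union.mp ha with h | h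
        exacts [hF h, hG h]
      · exact Finset.sup_mono Finset.subset_union_left
      · exact Finset.sup_mono Finset.subset_union_right
  have hopen : ∀ x ∈ 𝒪, OpenElem eA x := by
    rintro x ⟨F, hF, rfl⟩
    refine ⟨{F.sup id}, by simp⟩
  have hsup : sSup 𝒪 = m := by
    apply le_antisymm
    · refine sSup_le ?_
      rintro x ⟨F, hF, rfl⟩
      exact (hfin_sup F Sm hF).trans hSm.ge
    · rw [hSm]
      refine sSup_le ?_
      rintro x ⟨a, ha, rfl⟩
      exact le_sSup ⟨{a}, by simpa using ha, by simp⟩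
  have hgm : g m ≤ n := by
    rw [← hsup, hgoE 𝒪 hdir hopen]
    refine sSup_le ?_
    rintro y ⟨x, ⟨F, hF, rfl⟩, rfl⟩
    by_contra hyn
    have hT' : F.sup id ∈ T := hyn
    have hmem : eA (F.sup id) ∈ eA '' T := Set.mem_image_of_mem eA hT'
    exact hcm ((sInf_le hmem).trans ((hfin_sup F Sm hF).trans hSm.ge))
  exact le_trans inf_le_right (le_trans (sInf_le ⟨m, hm, rfl⟩) hgm)
end

section
/- Under the standing hypotheses on f, if o is an open element of D with f(⊥) ≤ o, then ■_f(o) = sSup { eA a | a ∈ A, eA a ≤ ■_f(o) }, and ■_f(o) is an open element of C. (Lemma 4.10(1).) -/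
section Aux
variable {A C : Type*} [DistribLattice A] [BoundedOrder A] [CompleteLattice C]

lemma e_monotone {e : A → C} (h : ∀ a b : A, e (a ⊓ b) = e a ⊓ e b) :
    Monotone e := by
  intro a b hab
  have : e a = e a ⊓ e b := by rw [← h]; rw [inf_eq_left.mpr hab]
  rw [this]; exact inf_le_right

lemma e_finset_inf {e : A → C} (htop : e ⊤ = ⊤)
    (h : ∀ a b : A, e (a ⊓ b) = e a ⊓ e b) (F : Finset A) :
    e (F.inf id) = sInf (e '' ↑F) := by
  classical
  induction F using Finset.induction with
  | empty => simp [htop]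
  | insert _ _ ha ih =>
      rename_i a F
      rw [Finset.inf_insert, h, ih]
      simp [sInf_insert, Set.image_insert_eq]

lemma e_finset_sup {e : A → C} (hbot : e ⊥ = ⊥)
    (h : ∀ a b : A, e (a ⊔ b) = e a ⊔ e b) (G : Finset A) :
    e (G.sup id) = sSup (e '' ↑G) := by
  classical
  induction G using Finset.induction with
  | empty => simp [hbot]
  | insert _ _ ha ih =>
      rename_i a G
      rw [Finset.sup_insert, h, ih]
      simp [sSup_insert, Set.image_insert_eq]

end Aux

/-- Lemma 4.10(1): under the standing hypotheses on `f`, if `o` is open in `D`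
and `f ⊥ ≤ o`, then `■_f o` is the join of the embedded lattice elements below
it, and `■_f o` is open in `C`. -/
theorem stmt7 {A B C D : Type*} [DistribLattice A] [BoundedOrder A]
    [DistribLattice B] [BoundedOrder B] [CompleteLattice C] [CompleteLattice D]
    (eA : A → C) (eB : B → D)
    (hceA : IsCanonicalExtension eA) (hceB : IsCanonicalExtension eB)
    (hCj : JoinPerfect C) (hCm : MeetPerfect C)
    (hDj : JoinPerfect D) (hDm : MeetPerfect D)
    (f : C → D) (hf : Monotone f)
    (hfcE : ClosedEsakia eA f) (hfoE : OpenEsakia eA f)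
    (hcl : ∀ a : A, ClosedElem eB (f (eA a)))
    (hadd : ∀ a b : A, f (eA (a ⊔ b)) ≤ f (eA a) ⊔ f (eA b)) :
    ∀ o : D, OpenElem eB o → f ⊥ ≤ o →
      bsq f o = sSup (eA '' {a : A | eA a ≤ bsq f o}) ∧ OpenElem eA (bsq f o) := by
  classical
  intro o ho hbot
  obtain ⟨U, hU⟩ := ho
  have emono : Monotone eA := e_monotone hceA.map_inf
  have ebmono : Monotone eB := e_monotone hceB.map_inf
  -- key claim
  have key : ∀ j : C, CJPrime j → f j ≤ o → ∃ a : A, j ≤ eA a ∧ f (eA a) ≤ o := by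
    intro j hj hjo
    obtain ⟨𝒮, h𝒮⟩ := hceA.dense_joinOfMeets j
    obtain ⟨x, hx, hjx⟩ := hj.2 _ (le_of_eq h𝒮)
    obtain ⟨S, hS𝒮, rfl⟩ := hx
    have hxj : sInf (eA '' S) ≤ j := by
      rw [h𝒮]; exact le_sSup ⟨S, hS𝒮, rfl⟩
    have hjeq : j = sInf (eA '' S) := le_antisymm hjx hxj
    set S' : Set A := {a | ∃ F : Finset A, ↑F ⊆ S ∧ a = F.inf id} with hS'def
    have hjle : ∀ a ∈ S', j ≤ eA a := by
      rintro a ⟨F, hFS, rfl⟩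
      rw [e_finset_inf hceA.map_top hceA.map_inf]
      rw [hjeq]
      exact sInf_le_sInf (Set.image_mono hFS)
    set 𝒞 : Set C := eA '' S' with h𝒞def
    have hStop : (⊤ : A) ∈ S' := ⟨∅, by simp⟩
    have hdd : DownDir 𝒞 := by
      constructor
      · exact ⟨eA ⊤, ⟨⊤, hStop, rfl⟩⟩
      · rintro x ⟨a, ⟨F, hF, rfl⟩, rfl⟩ y ⟨a', ⟨F', hF', rfl⟩, rfl⟩
        refine ⟨eA ((F ∪ F').inf id), ⟨(F ∪ F').inf id, ⟨F ∪ F', by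
          simp only [Finset.coe_union]
          exact Set.union_subset hF hF', rfl⟩, rfl⟩, ?_, ?_⟩
        · exact emono (Finset.inf_mono Finset.subset_union_left)
        · exact emono (Finset.inf_mono Finset.subset_union_right)
    have hclosed : ∀ c ∈ 𝒞, ClosedElem eA c := by
      rintro c ⟨a, _, rfl⟩
      exact ⟨{a}, by simp⟩
    have hinf𝒞 : sInf 𝒞 = j := by
      apply le_antisymm
      · have hsub : eA '' S ⊆ 𝒞 := by
          rintro x ⟨a, ha, rfl⟩
          exact ⟨a, ⟨{a}, by simpa using ha, by simp⟩, rfl⟩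
        calc sInf 𝒞 ≤ sInf (eA '' S) := sInf_le_sInf hsub
          _ = j := hjeq.symm
      · exact le_sInf (by rintro x ⟨a, ha, rfl⟩; exact hjle a ha)
    have hfj : f j = sInf (f '' 𝒞) := by
      rw [← hinf𝒞]; exact hfcE 𝒞 hdd hclosed
    -- closed witnesses for f (eA a)
    have hT : ∀ a : A, f (eA a) = sInf (eB '' (hcl a).choose) :=
      fun a => (hcl a).choose_spec
    set T : A → Set B := fun a => (hcl a).choose with hTdef
    set Tset : Set B := ⋃ a ∈ S', T a with hTsetdef
    have hle : sInf (eB '' Tset) ≤ sSup (eB '' U) := by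
      have h1 : sInf (eB '' Tset) ≤ f j := by
        rw [hfj]
        apply le_sInf
        rintro d ⟨c, ⟨a, haS', rfl⟩, rfl⟩
        rw [hT a]
        refine sInf_le_sInf (Set.image_mono ?_)
        rw [hTsetdef]
        show T a ⊆ ⋃ a ∈ S', T a
        exact Set.subset_biUnion_of_mem haS'
      calc sInf (eB '' Tset) ≤ f j := h1
        _ ≤ o := hjo
        _ = sSup (eB '' U) := hU
    obtain ⟨F, hFT, G, hGU, hFG⟩ := hceB.compact Tset U hle
    have hchoice : ∀ b ∈ F, ∃ a, a ∈ S' ∧ b ∈ T a := by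
      intro b hb
      have := hFT hb
      simpa [hTsetdef, Set.mem_iUnion] using this
    set g : B → A := fun b =>
      if h : ∃ a, a ∈ S' ∧ b ∈ T a then h.choose else ⊤ with hgdef
    have hg : ∀ b ∈ F, g b ∈ S' ∧ b ∈ T (g b) := by
      intro b hb
      have h := hchoice b hb
      simp only [hgdef, dif_pos h]
      exact h.choose_spec
    set a₀ : A := (F.image g).inf id with ha₀def
    refine ⟨a₀, ?_, ?_⟩
    · rw [ha₀def, e_finset_inf hceA.map_top hceA.map_inf]
      apply le_sInf
      rintro x ⟨a, ha, rfl⟩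
      simp only [Finset.coe_image, Set.mem_image, Finset.mem_coe] at ha
      obtain ⟨b, hb, rfl⟩ := ha
      exact hjle _ (hg b hb).1
    · have h2 : f (eA a₀) ≤ sInf (eB '' ↑F) := by
        apply le_sInf
        rintro x ⟨b, hb, rfl⟩
        have hb' : b ∈ F := hb
        have hle1 : a₀ ≤ g b := Finset.inf_le (Finset.mem_image_of_mem g hb')
        calc f (eA a₀) ≤ f (eA (g b)) := hf (emono hle1)
          _ = sInf (eB '' T (g b)) := hT (g b)
          _ ≤ eB b := sInf_le ⟨b, (hg b hb').2, rfl⟩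
      calc f (eA a₀) ≤ sInf (eB '' ↑F) := h2
        _ = eB (F.inf id) := (e_finset_inf hceB.map_top hceB.map_inf F).symm
        _ ≤ eB (G.sup id) := ebmono hFG
        _ = sSup (eB '' ↑G) := e_finset_sup hceB.map_bot hceB.map_sup G
        _ ≤ sSup (eB '' U) := sSup_le_sSup (Set.image_mono hGU)
        _ = o := hU.symm
  have step : ∀ a : A, f (eA a) ≤ o → eA a ≤ bsq f o := by
    intro a ha
    have := hCj (eA a)
    rw [this]
    apply sSup_le_sSup
    rintro j ⟨hj, hje⟩
    exact ⟨hj, le_trans (hf hje) ha⟩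
  have heq : bsq f o = sSup (eA '' {a : A | eA a ≤ bsq f o}) := by
    apply le_antisymm
    · apply sSup_le
      rintro j ⟨hj, hjo⟩
      obtain ⟨a, hja, hao⟩ := key j hj hjo
      exact le_trans hja (le_sSup ⟨a, step a hao, rfl⟩)
    · apply sSup_le
      rintro x ⟨a, ha, rfl⟩
      exact ha
  exact ⟨heq, ⟨_, heq⟩⟩
end

section
/- Under the standing hypotheses on g, if k is a closed element of D with k ≤ g(⊤), then ◆_g(k) = sInf { eA a | a ∈ A, ◆_g(k) ≤ eA a }, and ◆_g(k) is a closed element of C. (Lemma 4.10(2).) -/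
/-- Lemma 4.10(2): under the standing hypotheses on `g`, if `k` is closed in `D`
and `k ≤ g ⊤`, then `◆_g k` is the meet of the embedded lattice elements above
it, and `◆_g k` is closed in `C`. -/
theorem stmt8 {A B C D : Type*} [DistribLattice A] [BoundedOrder A]
    [DistribLattice B] [BoundedOrder B] [CompleteLattice C] [CompleteLattice D]
    (eA : A → C) (eB : B → D)
    (hceA : IsCanonicalExtension eA) (hceB : IsCanonicalExtension eB)
    (hCj : JoinPerfect C) (hCm : MeetPerfect C)
    (hDj : JoinPerfect D) (hDm : MeetPerfect D)
    (g : C → D) (hg : Monotone g)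
    (hgcE : ClosedEsakia eA g) (hgoE : OpenEsakia eA g)
    (hop : ∀ a : A, OpenElem eB (g (eA a)))
    (hmul : ∀ a b : A, g (eA a) ⊓ g (eA b) ≤ g (eA (a ⊓ b))) :
    ∀ k : D, ClosedElem eB k → k ≤ g ⊤ →
      bdiam g k = sInf (eA '' {a : A | bdiam g k ≤ eA a}) ∧
        ClosedElem eA (bdiam g k) := by

  classical
  intro k hk hkg
  have heA : Monotone eA := by
    intro a b hab
    have h := hceA.map_sup a b
    rw [sup_eq_right.mpr hab] at h
    exact le_sup_left.trans h.ge
  have heB : Monotone eB := by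
    intro a b hab
    have h := hceB.map_sup a b
    rw [sup_eq_right.mpr hab] at h
    exact le_sup_left.trans h.ge
  -- key claim
  have key : ∀ m : C, CMPrime m → k ≤ g m → ∃ a : A, eA a ≤ m ∧ k ≤ g (eA a) := by
    intro m hm hkm
    -- m is open
    obtain ⟨𝒮, h𝒮⟩ := hceA.dense_meetOfJoins m
    obtain ⟨o, ho, hom⟩ := hm.2 _ h𝒮.ge
    obtain ⟨S, hS𝒮, rfl⟩ := ho
    have hmo : m = sSup (eA '' S) :=
      le_antisymm (h𝒮.le.trans (sInf_le ⟨S, hS𝒮, rfl⟩)) hom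
    set S' : Set A := {a | ∃ F : Finset A, ↑F ⊆ S ∧ a = F.sup id} with hS'def
    have hS'sup : sSup (eA '' S') = m := by
      apply le_antisymm
      · apply sSup_le
        rintro _ ⟨a, ⟨F, hF, rfl⟩, rfl⟩
        calc eA (F.sup id) = F.sup (eA ∘ id) :=
              Finset.comp_sup_eq_sup_comp eA hceA.map_sup hceA.map_bot
          _ ≤ sSup (eA '' S) := Finset.sup_le fun b hb => le_sSup ⟨b, hF hb, rfl⟩
          _ = m := hmo.symm
      · rw [hmo]
        apply sSup_le
        rintro _ ⟨s, hs, rfl⟩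
        exact le_sSup ⟨s, ⟨{s}, by simpa using hs, by simp⟩, rfl⟩
    have hupdir : UpDir (eA '' S') := by
      constructor
      · exact ⟨eA ⊥, ⟨⊥, ⟨∅, by simp, by simp⟩, rfl⟩⟩
      · rintro _ ⟨a, ⟨F, hF, rfl⟩, rfl⟩ _ ⟨b, ⟨G, hG, rfl⟩, rfl⟩
        refine ⟨eA ((F ∪ G).sup id), ⟨(F ∪ G).sup id,
          ⟨F ∪ G, by simp [Finset.coe_union, Set.union_subset hF hG], rfl⟩, rfl⟩,
          heA (Finset.sup_mono Finset.subset_union_left),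
          heA (Finset.sup_mono Finset.subset_union_right)⟩
    have hopens : ∀ o ∈ eA '' S', OpenElem eA o := by
      rintro _ ⟨a, _, rfl⟩
      exact ⟨{a}, by simp⟩
    have hgm : g m = sSup (g '' (eA '' S')) := by
      rw [← hS'sup]; exact hgoE _ hupdir hopens
    -- open images of g ∘ eA
    set U : A → Set B := fun a => (hop a).choose with hUdef
    have hU : ∀ a, g (eA a) = sSup (eB '' U a) := fun a => (hop a).choose_spec
    set V : Set B := ⋃ a ∈ S', U a with hVdef
    have hV : sSup (g '' (eA '' S')) = sSup (eB '' V) := by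
      apply le_antisymm
      · apply sSup_le
        rintro _ ⟨_, ⟨a, ha, rfl⟩, rfl⟩
        rw [hU a]
        apply sSup_le
        rintro _ ⟨b, hb, rfl⟩
        exact le_sSup ⟨b, Set.mem_biUnion ha hb, rfl⟩
      · apply sSup_le
        rintro _ ⟨b, hb, rfl⟩
        rcases Set.mem_iUnion₂.mp hb with ⟨a, ha, hba⟩
        have h1 : eB b ≤ sSup (eB '' U a) := le_sSup ⟨b, hba, rfl⟩
        have h2 : sSup (eB '' U a) = g (eA a) := (hU a).symm
        exact h1.trans (h2.le.trans (le_sSup ⟨eA a, ⟨a, ha, rfl⟩, rfl⟩))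
    obtain ⟨K, hK⟩ := hk
    have hcmp : sInf (eB '' K) ≤ sSup (eB '' V) := by
      rw [← hK]; exact hkm.trans (hgm.le.trans hV.le)
    obtain ⟨F, hFK, G, hGV, hFG⟩ := hceB.compact K V hcmp
    have hGmem : ∀ b ∈ G, ∃ a ∈ S', b ∈ U a := fun b hb => by
      simpa using Set.mem_iUnion₂.mp (hGV hb)
    choose! φ hφ1 hφ2 using hGmem
    refine ⟨G.sup φ, ?_, ?_⟩
    · calc eA (G.sup φ) = G.sup (eA ∘ φ) :=
          Finset.comp_sup_eq_sup_comp eA hceA.map_sup hceA.map_bot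
        _ ≤ m := Finset.sup_le fun b hb =>
            (le_sSup ⟨φ b, hφ1 b hb, rfl⟩ : eA (φ b) ≤ sSup (eA '' S')).trans hS'sup.le
    · have hk1 : k ≤ eB (F.inf id) := by
        rw [Finset.comp_inf_eq_inf_comp eB hceB.map_inf hceB.map_top]
        exact Finset.le_inf fun b hb => hK.le.trans (sInf_le ⟨b, hFK hb, rfl⟩)
      have hk2 : eB (G.sup id) ≤ g (eA (G.sup φ)) := by
        rw [Finset.comp_sup_eq_sup_comp eB hceB.map_sup hceB.map_bot]
        refine Finset.sup_le fun b hb => ?_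
        have h1 : eB b ≤ sSup (eB '' U (φ b)) := le_sSup ⟨b, hφ2 b hb, rfl⟩
        calc (eB ∘ id) b ≤ sSup (eB '' U (φ b)) := h1
          _ = g (eA (φ b)) := (hU (φ b)).symm
          _ ≤ g (eA (G.sup φ)) := hg (heA (Finset.le_sup hb))
      exact hk1.trans ((heB hFG).trans hk2)
  -- main argument
  set T : Set A := {a | k ≤ g (eA a)} with hTdef
  have h1 : bdiam g k ≤ sInf (eA '' T) := by
    apply le_sInf
    rintro _ ⟨a, ha, rfl⟩
    conv_rhs => rw [hCm (eA a)]
    exact le_sInf fun m hm => sInf_le ⟨hm.1, ha.trans (hg hm.2)⟩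
  have h2 : sInf (eA '' T) ≤ bdiam g k := by
    apply le_sInf
    rintro m hm
    obtain ⟨a, ham, hka⟩ := key m hm.1 hm.2
    have hmem : eA a ∈ eA '' T := ⟨a, hka, rfl⟩
    exact (sInf_le hmem).trans ham
  have heq : bdiam g k = sInf (eA '' T) := le_antisymm h1 h2
  constructor
  · apply le_antisymm
    · exact le_sInf fun x hx => by obtain ⟨a, ha, rfl⟩ := hx; exact ha
    · refine le_trans (sInf_le_sInf (Set.image_mono (f := eA) ?_)) heq.ge
      intro a ha
      exact heq.le.trans (sInf_le ⟨a, ha, rfl⟩)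
  · exact ⟨T, heq⟩
end

section
/- Under the standing hypotheses on f, for every u ∈ C it holds that f(u) = f(⊥) ⊔ ◇_f(u). (Proposition 4.7, identity (11).) -/
section Aux

variable {A C : Type*} [DistribLattice A] [BoundedOrder A] [CompleteLattice C]

/-- `e` preserving finite infs preserves `Finset.inf`. -/
lemma eA_finset_inf (eA : A → C) (hce : IsCanonicalExtension eA) (F : Finset A) :
    eA (F.inf id) = F.inf (fun a => eA a) := by
  classical
  induction F using Finset.induction with
  | empty => simpa using hce.map_top
  | insert a s h ih => simp [Finset.inf_insert, hce.map_inf, ih]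

/-- Every completely join-prime element is closed. -/
lemma cjp_closed (eA : A → C) (hce : IsCanonicalExtension eA) (j : C)
    (hj : CJPrime j) : ∃ S : Set A, j = sInf (eA '' S) := by
  obtain ⟨𝒮, h𝒮⟩ := hce.dense_joinOfMeets j
  obtain ⟨s, hs, hjs⟩ := hj.2 _ (le_of_eq h𝒮)
  obtain ⟨S, hS𝒮, rfl⟩ := hs
  exact ⟨S, le_antisymm hjs (by rw [h𝒮]; exact le_sSup ⟨S, hS𝒮, rfl⟩)⟩

/-- A completely join-prime element is a down-directed meet of images of elements of `A`;
hence it lies below `eA t` for some `t` whose family of images captures it. -/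
lemma cjp_meet_rep (eA : A → C) (hce : IsCanonicalExtension eA) (j : C)
    (hj : CJPrime j) :
    ∃ T : Set A, j = sInf (eA '' T) ∧ DownDir (eA '' T) ∧
      (∀ c ∈ eA '' T, ClosedElem eA c) := by
  classical
  obtain ⟨S, hS⟩ := cjp_closed eA hce j hj
  refine ⟨{a | ∃ F : Finset A, ↑F ⊆ S ∧ a = F.inf id}, ?_, ?_, ?_⟩
  · apply le_antisymm
    · apply le_sInf
      rintro x ⟨t, ⟨F, hFS, rfl⟩, rfl⟩
      rw [hS, eA_finset_inf eA hce]
      exact Finset.le_inf fun a ha => sInf_le ⟨a, hFS ha, rfl⟩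
    · rw [hS]
      apply sInf_le_sInf
      rintro x ⟨a, haS, rfl⟩
      exact ⟨a, ⟨{a}, by simpa using haS, by simp⟩, rfl⟩
  · constructor
    · exact ⟨eA ⊤, ⟨⊤, ⟨∅, by simp, by simp⟩, rfl⟩⟩
    · rintro x ⟨t₁, ⟨F₁, hF₁, rfl⟩, rfl⟩ y ⟨t₂, ⟨F₂, hF₂, rfl⟩, rfl⟩
      refine ⟨eA (F₁.inf id ⊓ F₂.inf id),
        ⟨F₁.inf id ⊓ F₂.inf id, ⟨F₁ ∪ F₂, ?_, by simp [Finset.inf_union]⟩, rfl⟩, ?_, ?_⟩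
      · intro a ha
        rcases Finset.mem_union.mp ha with h | h
        · exact hF₁ h
        · exact hF₂ h
      · rw [hce.map_inf]; exact inf_le_left
      · rw [hce.map_inf]; exact inf_le_right
  · rintro c ⟨t, _, rfl⟩
    exact ⟨{t}, by simp⟩

end Aux

/-- Proposition 4.7, identity (11): under the standing hypotheses on `f`,
`f u = f ⊥ ⊔ ◇_f u` for every `u ∈ C`. -/
theorem stmt9 {A B C D : Type*} [DistribLattice A] [BoundedOrder A]
    [DistribLattice B] [BoundedOrder B] [CompleteLattice C] [CompleteLattice D]
    (eA : A → C) (eB : B → D)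
    (hceA : IsCanonicalExtension eA) (hceB : IsCanonicalExtension eB)
    (hCj : JoinPerfect C) (hCm : MeetPerfect C)
    (hDj : JoinPerfect D) (hDm : MeetPerfect D)
    (f : C → D) (hf : Monotone f)
    (hfcE : ClosedEsakia eA f) (hfoE : OpenEsakia eA f)
    (hcl : ∀ a : A, ClosedElem eB (f (eA a)))
    (hadd : ∀ a b : A, f (eA (a ⊔ b)) ≤ f (eA a) ⊔ f (eA b)) :
    ∀ u : C, f u = f ⊥ ⊔ diam f u := by
  intro u
  apply le_antisymm
  · -- hard direction
    have key : ∀ m : D, CMPrime m → f ⊥ ⊔ diam f u ≤ m → f u ≤ m := by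
      intro m hm hle
      have h1 : f ⊥ ≤ m := le_trans le_sup_left hle
      have h2 : ∀ j : C, CJPrime j → j ≤ u → f j ≤ m := by
        intro j hj hju
        have hmem : f j ∈ f '' {j | CJPrime j ∧ j ≤ u} := ⟨j, ⟨hj, hju⟩, rfl⟩
        have : f j ≤ diam f u := le_sSup hmem
        exact le_trans (le_trans this le_sup_right) hle
      set W : Set A := {a | f (eA a) ≤ m} with hW
      have hWbot : (⊥ : A) ∈ W := by
        show f (eA ⊥) ≤ m
        rw [hceA.map_bot]; exact h1
      have hWsup : ∀ a ∈ W, ∀ b ∈ W, a ⊔ b ∈ W := fun a ha b hb =>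
        le_trans (hadd a b) (sup_le ha hb)
      have hUD : UpDir (eA '' W) := by
        constructor
        · exact ⟨eA ⊥, ⟨⊥, hWbot, rfl⟩⟩
        · rintro x ⟨a, ha, rfl⟩ y ⟨b, hb, rfl⟩
          refine ⟨eA (a ⊔ b), ⟨a ⊔ b, hWsup a ha b hb, rfl⟩, ?_, ?_⟩
          · rw [hceA.map_sup]; exact le_sup_left
          · rw [hceA.map_sup]; exact le_sup_right
      have hopen : ∀ o ∈ eA '' W, OpenElem eA o := by
        rintro o ⟨a, _, rfl⟩
        exact ⟨{a}, by simp⟩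
      have hmain : u ≤ sSup (eA '' W) := by
        conv_lhs => rw [hCj u]
        apply sSup_le
        rintro j ⟨hj, hju⟩
        obtain ⟨T, hjT, hDD, hclosed⟩ := cjp_meet_rep eA hceA j hj
        have hfj : f j = sInf (f '' (eA '' T)) := by
          rw [hjT]; exact hfcE _ hDD hclosed
        have hfjm : sInf (f '' (eA '' T)) ≤ m := hfj ▸ h2 j hj hju
        obtain ⟨s, hs, hsm⟩ := hm.2 _ hfjm
        obtain ⟨x, hx, rfl⟩ := hs
        obtain ⟨t, htT, rfl⟩ := hx
        have : t ∈ W := hsm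
        calc j = sInf (eA '' T) := hjT
          _ ≤ eA t := sInf_le ⟨t, htT, rfl⟩
          _ ≤ sSup (eA '' W) := le_sSup ⟨t, this, rfl⟩
      calc f u ≤ f (sSup (eA '' W)) := hf hmain
        _ = sSup (f '' (eA '' W)) := hfoE _ hUD hopen
        _ ≤ m := by
            apply sSup_le
            rintro x ⟨y, ⟨a, ha, rfl⟩, rfl⟩
            exact ha
    conv_rhs => rw [hDm (f ⊥ ⊔ diam f u)]
    apply le_sInf
    rintro m ⟨hm, hle⟩
    exact key m hm hle
  · apply sup_le (hf bot_le)
    apply sSup_le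
    rintro x ⟨j, ⟨_, hju⟩, rfl⟩
    exact hf hju
end

section
/- Under the standing hypotheses on f, it holds that f(u ⊔ v) ≤ f(u) ⊔ f(v) for all u, v ∈ C; that is, additivity of f on the embedded lattice A lifts to additivity on the whole canonical extension C. (Theorem 4.3(1).) -/
/-- Theorem 4.3(1): under the standing hypotheses on `f`, additivity on the
embedded lattice lifts to additivity on all of `C`. -/
theorem stmt11 {A B C D : Type*} [DistribLattice A] [BoundedOrder A]
    [DistribLattice B] [BoundedOrder B] [CompleteLattice C] [CompleteLattice D]
    (eA : A → C) (eB : B → D)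
    (hceA : IsCanonicalExtension eA) (hceB : IsCanonicalExtension eB)
    (hCj : JoinPerfect C) (hCm : MeetPerfect C)
    (hDj : JoinPerfect D) (hDm : MeetPerfect D)
    (f : C → D) (hf : Monotone f)
    (hfcE : ClosedEsakia eA f) (hfoE : OpenEsakia eA f)
    (hcl : ∀ a : A, ClosedElem eB (f (eA a)))
    (hadd : ∀ a b : A, f (eA (a ⊔ b)) ≤ f (eA a) ⊔ f (eA b)) :
    ∀ u v : C, f (u ⊔ v) ≤ f u ⊔ f v := by

  classical
  intro u v
  have emono : Monotone eA := by
    intro a b hab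
    have h1 : eA a ⊔ eA b = eA b := by
      rw [← hceA.map_sup, sup_eq_right.mpr hab]
    exact le_sup_left.trans h1.le
  -- reduce to completely meet-primes above f u ⊔ f v
  have goal : ∀ n : D, CMPrime n → f u ⊔ f v ≤ n → f (u ⊔ v) ≤ n := by
    intro n hn hn2
    have hfu : f u ≤ n := le_sup_left.trans hn2
    have hfv : f v ≤ n := le_sup_right.trans hn2
    set T : Set A := {a | f (eA a) ≤ n} with hT
    -- every completely join-prime below u ⊔ v is below some eA a with a ∈ T
    have key : ∀ j : C, CJPrime j → j ≤ u ⊔ v → ∃ a ∈ T, j ≤ eA a := by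
      intro j hj hjuv
      -- j is a closed element
      obtain ⟨𝒮, h𝒮⟩ := hceA.dense_joinOfMeets j
      obtain ⟨c, hc, hjc⟩ := hj.2 _ (le_of_eq h𝒮)
      obtain ⟨S, hS, rfl⟩ := hc
      have hSj : j = sInf (eA '' S) :=
        le_antisymm hjc (h𝒮 ▸ le_sSup ⟨S, hS, rfl⟩)
      -- the family of images of A above j
      set 𝒞 : Set C := eA '' {a | j ≤ eA a} with h𝒞
      have hjinf : j = sInf 𝒞 := by
        apply le_antisymm
        · exact le_sInf (by rintro c ⟨a, ha, rfl⟩; exact ha)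
        · refine le_trans (sInf_le_sInf ?_) hSj.ge
          rintro c ⟨a, ha, rfl⟩
          exact ⟨a, hSj ▸ sInf_le ⟨a, ha, rfl⟩, rfl⟩
      have hdd : DownDir 𝒞 := by
        constructor
        · exact ⟨eA ⊤, ⟨⊤, by simp [hceA.map_top], rfl⟩⟩
        · rintro x ⟨a, ha, rfl⟩ y ⟨b, hb, rfl⟩
          refine ⟨eA (a ⊓ b), ⟨a ⊓ b, ?_, rfl⟩, ?_, ?_⟩
          · simp only [Set.mem_setOf_eq, hceA.map_inf]
            exact le_inf ha hb
          · exact emono inf_le_left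
          · exact emono inf_le_right
      have hclosed : ∀ c ∈ 𝒞, ClosedElem eA c := by
        rintro c ⟨a, _, rfl⟩
        exact ⟨{a}, by rw [Set.image_singleton, sInf_singleton]⟩
      have hesak := hfcE 𝒞 hdd hclosed
      -- f j ≤ n
      have hfj : f j ≤ n := by
        obtain ⟨s, hs, hjs⟩ := hj.2 {u, v} (by rw [sSup_pair]; exact hjuv)
        rcases hs with rfl | rfl
        · exact (hf hjs).trans hfu
        · exact (hf hjs).trans hfv
      have hinf : sInf (f '' 𝒞) ≤ n := by
        rw [← hesak, ← hjinf]; exact hfj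
      obtain ⟨d, hd, hdn⟩ := hn.2 _ hinf
      obtain ⟨c, hc, rfl⟩ := hd
      obtain ⟨a, ha, rfl⟩ := hc
      exact ⟨a, hdn, ha⟩
    -- hence u ⊔ v is below the open element sSup (eA '' T)
    have huv : u ⊔ v ≤ sSup (eA '' T) := by
      calc u ⊔ v = sSup {j | CJPrime j ∧ j ≤ u ⊔ v} := hCj (u ⊔ v)
        _ ≤ sSup (eA '' T) := by
            apply sSup_le
            rintro j ⟨hj, hjuv⟩
            obtain ⟨a, haT, hja⟩ := key j hj hjuv
            exact hja.trans (le_sSup ⟨a, haT, rfl⟩)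
    -- finite joins from T stay below n
    have hfin : ∀ G : Finset A, ↑G ⊆ T → f (eA (G.sup id)) ≤ n := by
      intro G
      induction G using Finset.induction_on with
      | empty =>
          intro _
          rw [Finset.sup_empty, hceA.map_bot]
          exact (hf bot_le).trans hfu
      | insert a G hnotmem ih =>
          intro hins
          have haT : a ∈ T := hins (Finset.mem_insert_self a G)
          have hGT : ↑G ⊆ T := fun x hx => hins (Finset.mem_insert_of_mem hx)
          rw [Finset.sup_insert]
          exact (hadd a (G.sup id)).trans (sup_le haT (ih hGT))
    -- the up-directed family of finite joins
    set 𝒪 : Set C := (fun G : Finset A => eA (G.sup id)) '' {G : Finset A | ↑G ⊆ T} with h𝒪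
    have hOsup : sSup (eA '' T) = sSup 𝒪 := by
      apply le_antisymm
      · apply sSup_le
        rintro x ⟨a, ha, rfl⟩
        refine le_of_eq ?_ |>.trans (le_sSup ⟨{a}, by simpa using ha, rfl⟩)
        simp
      · apply sSup_le
        rintro x ⟨G, hG, rfl⟩
        have : ∀ H : Finset A, ↑H ⊆ T → eA (H.sup id) ≤ sSup (eA '' T) := by
          intro H
          induction H using Finset.induction_on with
          | empty =>
              intro _
              rw [Finset.sup_empty, hceA.map_bot]
              exact bot_le
          | insert a H hnotmem ih =>
              intro hins
              rw [Finset.sup_insert, hceA.map_sup]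
              refine sup_le ?_ (ih fun x hx => hins (Finset.mem_insert_of_mem hx))
              exact le_sSup ⟨a, hins (Finset.mem_insert_self a H), rfl⟩
        exact this G hG
    have hOdir : UpDir 𝒪 := by
      constructor
      · exact ⟨eA ((∅ : Finset A).sup id), ⟨∅, by simp, rfl⟩⟩
      · rintro x ⟨G, hG, rfl⟩ y ⟨G', hG', rfl⟩
        refine ⟨eA ((G ∪ G').sup id), ⟨G ∪ G', ?_, rfl⟩, ?_, ?_⟩
        · intro a ha
          rcases Finset.mem_union.mp (by exact_mod_cast ha) with h | h
          exacts [hG h, hG' h]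
        · exact emono (Finset.sup_mono Finset.subset_union_left)
        · exact emono (Finset.sup_mono Finset.subset_union_right)
    have hOopen : ∀ o ∈ 𝒪, OpenElem eA o := by
      rintro o ⟨G, _, rfl⟩
      exact ⟨{G.sup id}, by rw [Set.image_singleton, sSup_singleton]⟩
    have hoE := hfoE 𝒪 hOdir hOopen
    have hfO : f (sSup (eA '' T)) ≤ n := by
      rw [hOsup, hoE]
      apply sSup_le
      rintro d ⟨o, ho, rfl⟩
      obtain ⟨G, hG, rfl⟩ := ho
      exact hfin G hG
    exact (hf huv).trans hfO
  calc f (u ⊔ v) ≤ sInf {n | CMPrime n ∧ f u ⊔ f v ≤ n} := by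
        apply le_sInf
        rintro n ⟨hn, hn2⟩
        exact goal n hn hn2
    _ = f u ⊔ f v := (hDm (f u ⊔ f v)).symm
end

section
/- Under the standing hypotheses on g, it holds that g(u) ⊓ g(v) ≤ g(u ⊓ v) for all u, v ∈ C; that is, multiplicativity of g on the embedded lattice A lifts to multiplicativity on the whole canonical extension C. (Theorem 4.3(2).) -/
/-- Theorem 4.3(2): under the standing hypotheses on `g`, multiplicativity on
the embedded lattice lifts to multiplicativity on all of `C`. -/
theorem stmt12 {A B C D : Type*} [DistribLattice A] [BoundedOrder A]
    [DistribLattice B] [BoundedOrder B] [CompleteLattice C] [CompleteLattice D]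
    (eA : A → C) (eB : B → D)
    (hceA : IsCanonicalExtension eA) (hceB : IsCanonicalExtension eB)
    (hCj : JoinPerfect C) (hCm : MeetPerfect C)
    (hDj : JoinPerfect D) (hDm : MeetPerfect D)
    (g : C → D) (hg : Monotone g)
    (hgcE : ClosedEsakia eA g) (hgoE : OpenEsakia eA g)
    (hop : ∀ a : A, OpenElem eB (g (eA a)))
    (hmul : ∀ a b : A, g (eA a) ⊓ g (eA b) ≤ g (eA (a ⊓ b))) :
    ∀ u v : C, g u ⊓ g v ≤ g (u ⊓ v) := by
  intro u v
  have key : ∀ p : D, CJPrime p → p ≤ g u ⊓ g v → p ≤ g (u ⊓ v) := by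
    intro p hp hple
    have heAmono : Monotone eA := by
      intro a b hab
      have h1 : a ⊓ b = a := inf_eq_left.mpr hab
      calc eA a = eA (a ⊓ b) := by rw [h1]
        _ = eA a ⊓ eA b := hceA.map_inf a b
        _ ≤ eA b := inf_le_right
    set F : Set A := {a | p ≤ g (eA a)} with hF
    have htopF : (⊤ : A) ∈ F := by
      have h2 : p ≤ g ⊤ := le_trans hple (le_trans inf_le_left (hg le_top))
      simpa [hF, hceA.map_top] using h2
    have hFinf : ∀ a ∈ F, ∀ b ∈ F, a ⊓ b ∈ F := by
      intro a ha b hb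
      exact le_trans (le_inf ha hb) (hmul a b)
    have hdd : DownDir (eA '' F) := by
      refine ⟨⟨eA ⊤, ⟨⊤, htopF, rfl⟩⟩, ?_⟩
      rintro _ ⟨a, ha, rfl⟩ _ ⟨b, hb, rfl⟩
      exact ⟨eA (a ⊓ b), ⟨a ⊓ b, hFinf a ha b hb, rfl⟩,
        heAmono inf_le_left, heAmono inf_le_right⟩
    have hclosed : ∀ c ∈ eA '' F, ClosedElem eA c := by
      rintro _ ⟨a, _, rfl⟩
      exact ⟨{a}, by simp⟩
    set x := sInf (eA '' F) with hx
    have hpgx : p ≤ g x := by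
      rw [hx, hgcE (eA '' F) hdd hclosed]
      refine le_sInf ?_
      rintro _ ⟨_, ⟨a, ha, rfl⟩, rfl⟩
      exact ha
    have hxle : ∀ w : C, p ≤ g w → x ≤ w := by
      intro w hpw
      conv_rhs => rw [hCm w]
      refine le_sInf ?_
      rintro m ⟨hm, hwm⟩
      -- m is open
      obtain ⟨𝒮, h𝒮⟩ := hceA.dense_meetOfJoins m
      obtain ⟨s, hs, hsm⟩ := hm.2 _ (le_of_eq h𝒮.symm)
      have hms : m = s := le_antisymm (h𝒮 ▸ sInf_le hs) hsm
      obtain ⟨T, _, rfl⟩ := hs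
      -- replace T by the ideal T' = {b | eA b ≤ m}
      set T' : Set A := {b | eA b ≤ m} with hT'
      have hmT' : m = sSup (eA '' T') := by
        apply le_antisymm
        · rw [hms]
          refine sSup_le ?_
          rintro _ ⟨b, hb, rfl⟩
          refine le_sSup ⟨b, ?_, rfl⟩
          show eA b ≤ m
          rw [hms]
          exact le_sSup ⟨b, hb, rfl⟩
        · refine sSup_le ?_
          rintro _ ⟨b, hb, rfl⟩
          exact hb
      have hud : UpDir (eA '' T') := by
        constructor
        · refine ⟨eA ⊥, ⟨⊥, ?_, rfl⟩⟩
          rw [hT']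
          show eA ⊥ ≤ m
          simp [hceA.map_bot]
        · rintro _ ⟨a, ha, rfl⟩ _ ⟨b, hb, rfl⟩
          refine ⟨eA (a ⊔ b), ⟨a ⊔ b, ?_, rfl⟩,
            heAmono le_sup_left, heAmono le_sup_right⟩
          show eA (a ⊔ b) ≤ m
          rw [hceA.map_sup]
          exact sup_le ha hb
      have hopen : ∀ o ∈ eA '' T', OpenElem eA o := by
        rintro _ ⟨b, _, rfl⟩
        exact ⟨{b}, by simp⟩
      have hgm : g m = sSup (g '' (eA '' T')) := by
        conv_lhs => rw [hmT']
        exact hgoE (eA '' T') hud hopen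
      have hpm : p ≤ g m := le_trans hpw (hg hwm)
      rw [hgm] at hpm
      obtain ⟨_, ⟨_, ⟨b, hb, rfl⟩, rfl⟩, hpb⟩ := hp.2 _ hpm
      have hbF : b ∈ F := hpb
      calc x ≤ eA b := sInf_le ⟨b, hbF, rfl⟩
        _ ≤ m := hb
    have hxu : x ≤ u := hxle u (le_trans hple inf_le_left)
    have hxv : x ≤ v := hxle v (le_trans hple inf_le_right)
    exact le_trans hpgx (hg (le_inf hxu hxv))
  conv_lhs => rw [hDj (g u ⊓ g v)]
  refine sSup_le ?_
  rintro p ⟨hp, hple⟩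
  exact key p hp hple
end

section
/- Conditional Esakia lemma, first half: under the standing hypotheses on f, let 𝒪 be an up-directed family of open elements of D with f(⊥) ≤ sSup 𝒪. Then ■_f(sSup 𝒪) = sSup { ■_f(o) | o ∈ 𝒪 }. Moreover there exists an up-directed subfamily 𝒪' ⊆ 𝒪 such that sSup 𝒪' = sSup 𝒪, ■_f(o) is open in C for every o ∈ 𝒪', and sSup { ■_f(o) | o ∈ 𝒪' } = sSup { ■_f(o) | o ∈ 𝒪 }. (Proposition 4.11(1).) -/
private lemma mono_of_map_inf' {A C : Type*} [SemilatticeInf A] [SemilatticeInf C]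
    {e : A → C} (h : ∀ a b, e (a ⊓ b) = e a ⊓ e b) : Monotone e := by
  intro a b hab
  have h1 : e (a ⊓ b) = e a := by rw [inf_eq_left.mpr hab]
  calc e a = e (a ⊓ b) := h1.symm
    _ = e a ⊓ e b := h a b
    _ ≤ e b := inf_le_right

private lemma map_finsetSup_le' {B D : Type*} [DistribLattice B] [BoundedOrder B]
    [CompleteLattice D] (e : B → D) (hbot : e ⊥ = ⊥)
    (hsup : ∀ a b, e (a ⊔ b) = e a ⊔ e b) (G : Finset B) {x : D}
    (hx : ∀ b ∈ G, e b ≤ x) : e (G.sup id) ≤ x := by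
  induction G using Finset.cons_induction with
  | empty => simp [hbot]
  | cons b G hb ih =>
    rw [Finset.sup_cons, hsup]
    exact sup_le (hx b (by simp)) (ih fun c hc => hx c (by simp [hc]))

private theorem key_closed' {A B C D : Type*} [DistribLattice A] [BoundedOrder A]
    [DistribLattice B] [BoundedOrder B] [CompleteLattice C] [CompleteLattice D]
    {eA : A → C} {eB : B → D}
    (hceA : IsCanonicalExtension eA) (hceB : IsCanonicalExtension eB)
    {f : C → D} (hf : Monotone f)
    (hfcE : ClosedEsakia eA f)
    (hcl : ∀ a : A, ClosedElem eB (f (eA a)))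
    {j : C} (hj : CJPrime j) (V : Set B) (hle : f j ≤ sSup (eB '' V)) :
    ∃ a : A, j ≤ eA a ∧ ∃ G : Finset B, ↑G ⊆ V ∧ f (eA a) ≤ eB (G.sup id) := by
  classical
  have monoA : Monotone eA := mono_of_map_inf' hceA.map_inf
  have monoB : Monotone eB := mono_of_map_inf' hceB.map_inf
  -- j is closed
  obtain ⟨𝒮, h𝒮⟩ := hceA.dense_joinOfMeets j
  obtain ⟨c, hc, hjc⟩ := hj.2 _ (le_of_eq h𝒮)
  obtain ⟨S, hS𝒮, rfl⟩ := hc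
  have hjS : j = sInf (eA '' S) :=
    le_antisymm hjc ((le_sSup (Set.mem_image_of_mem _ hS𝒮)).trans h𝒮.ge)
  -- the meet-closure of S
  set Sstar : Set A := {a | ∃ F : Finset A, ↑F ⊆ S ∧ a = F.inf id} with hSstar
  have htop : ⊤ ∈ Sstar := ⟨∅, by simp⟩
  have hinfmem : ∀ a ∈ Sstar, ∀ b ∈ Sstar, a ⊓ b ∈ Sstar := by
    rintro _ ⟨F1, hF1, rfl⟩ _ ⟨F2, hF2, rfl⟩
    exact ⟨F1 ∪ F2, by
      refine ⟨?_, ?_⟩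
      · intro c hc
        rcases Finset.mem_union.mp (by exact_mod_cast hc) with h | h
        · exact hF1 h
        · exact hF2 h
      · rw [Finset.inf_union]⟩
  have hjF : ∀ F : Finset A, ↑F ⊆ S → j ≤ eA (F.inf id) := by
    intro F
    induction F using Finset.cons_induction with
    | empty => intro _; simp [hceA.map_top]
    | cons b F hb ih =>
      intro hF
      rw [Finset.inf_cons, hceA.map_inf]
      refine le_inf ?_ (ih fun c hc => hF (by simp [hc]))
      exact hjS.le.trans (sInf_le ⟨b, hF (by simp), rfl⟩)
  have hjle : ∀ a ∈ Sstar, j ≤ eA a := by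
    rintro _ ⟨F, hF, rfl⟩
    exact hjF F hF
  -- the family of closed elements
  have hclosed : ∀ c ∈ eA '' Sstar, ClosedElem eA c := by
    rintro _ ⟨a, _, rfl⟩
    exact ⟨{a}, by simp⟩
  have hdir : DownDir (eA '' Sstar) := by
    refine ⟨⟨eA ⊤, ⟨⊤, htop, rfl⟩⟩, ?_⟩
    rintro _ ⟨a, ha, rfl⟩ _ ⟨b, hb, rfl⟩
    exact ⟨eA (a ⊓ b), ⟨a ⊓ b, hinfmem a ha b hb, rfl⟩,
      by rw [hceA.map_inf]; exact inf_le_left,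
      by rw [hceA.map_inf]; exact inf_le_right⟩
  have hSsub : eA '' S ⊆ eA '' Sstar :=
    Set.image_mono fun a ha => ⟨{a}, by simpa, by simp⟩
  have hinfeq : sInf (eA '' Sstar) = j :=
    le_antisymm ((sInf_le_sInf hSsub).trans hjS.ge)
      (le_sInf (by rintro _ ⟨a, ha, rfl⟩; exact hjle a ha))
  have h5 : f j = sInf (f '' (eA '' Sstar)) := by
    rw [← hinfeq]; exact hfcE _ hdir hclosed
  choose T hT using hcl
  set T' : Set B := ⋃ a ∈ Sstar, T a with hT'def
  have hT'le : sInf (eB '' T') ≤ f j := by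
    rw [h5]
    refine le_sInf ?_
    rintro _ ⟨_, ⟨a, ha, rfl⟩, rfl⟩
    rw [hT a]
    exact sInf_le_sInf (Set.image_mono (Set.subset_biUnion_of_mem ha))
  obtain ⟨F, hFT', G, hGV, hFG⟩ := hceB.compact T' V (hT'le.trans hle)
  have hFa : ∀ F : Finset B, ↑F ⊆ T' → ∃ a ∈ Sstar, f (eA a) ≤ eB (F.inf id) := by
    intro F
    induction F using Finset.cons_induction with
    | empty => intro _; exact ⟨⊤, htop, by simp [hceB.map_top]⟩
    | cons b F hb ih =>
      intro hFT'
      obtain ⟨a', ha', hfa'⟩ := ih (fun c hc => hFT' (by simp [hc]))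
      have hbmem : b ∈ T' := hFT' (by simp)
      obtain ⟨a_b, hab, hbT⟩ : ∃ a ∈ Sstar, b ∈ T a := by
        simpa [hT'def] using hbmem
      refine ⟨a_b ⊓ a', hinfmem _ hab _ ha', ?_⟩
      rw [Finset.inf_cons, hceB.map_inf]
      refine le_inf ?_ ?_
      · exact (hf (monoA inf_le_left)).trans ((hT a_b).le.trans (sInf_le ⟨b, hbT, rfl⟩))
      · exact (hf (monoA inf_le_right)).trans hfa'
  obtain ⟨a, haS, hafin⟩ := hFa F hFT'
  exact ⟨a, hjle a haS, G, hGV, hafin.trans (monoB hFG)⟩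

/-- Proposition 4.11(1), conditional Esakia lemma (first half). -/
theorem stmt13 {A B C D : Type*} [DistribLattice A] [BoundedOrder A]
    [DistribLattice B] [BoundedOrder B] [CompleteLattice C] [CompleteLattice D]
    (eA : A → C) (eB : B → D)
    (hceA : IsCanonicalExtension eA) (hceB : IsCanonicalExtension eB)
    (hCj : JoinPerfect C) (hCm : MeetPerfect C)
    (hDj : JoinPerfect D) (hDm : MeetPerfect D)
    (f : C → D) (hf : Monotone f)
    (hfcE : ClosedEsakia eA f) (hfoE : OpenEsakia eA f)
    (hcl : ∀ a : A, ClosedElem eB (f (eA a)))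
    (hadd : ∀ a b : A, f (eA (a ⊔ b)) ≤ f (eA a) ⊔ f (eA b))
    (𝒪 : Set D) (h𝒪dir : UpDir 𝒪) (h𝒪op : ∀ o ∈ 𝒪, OpenElem eB o)
    (hbot : f ⊥ ≤ sSup 𝒪) :
    bsq f (sSup 𝒪) = sSup (bsq f '' 𝒪) ∧
    ∃ 𝒪' ⊆ 𝒪, UpDir 𝒪' ∧ sSup 𝒪' = sSup 𝒪 ∧
      (∀ o ∈ 𝒪', OpenElem eA (bsq f o)) ∧
      sSup (bsq f '' 𝒪') = sSup (bsq f '' 𝒪) := by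
  classical
  have monoB : Monotone eB := mono_of_map_inf' hceB.map_inf
  have hU' : ∀ o : D, ∃ Uo : Set B, o ∈ 𝒪 → o = sSup (eB '' Uo) := by
    intro o
    by_cases h : o ∈ 𝒪
    · obtain ⟨Uo, hUo⟩ := h𝒪op o h
      exact ⟨Uo, fun _ => hUo⟩
    · exact ⟨∅, fun h' => absurd h' h⟩
  choose U hU using hU'
  -- ■_f is open on opens
  have hopen : ∀ o ∈ 𝒪, bsq f o = sSup (eA '' {a | f (eA a) ≤ o}) := by
    intro o ho
    apply le_antisymm
    · apply sSup_le
      rintro j ⟨hj, hjo⟩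
      have hle : f j ≤ sSup (eB '' U o) := by rw [← hU o ho]; exact hjo
      obtain ⟨a, hja, G, hGU, hfa⟩ := key_closed' hceA hceB hf hfcE hcl hj (U o) hle
      have hao : f (eA a) ≤ o := by
        refine hfa.trans (map_finsetSup_le' eB hceB.map_bot hceB.map_sup G ?_)
        intro b hb
        rw [hU o ho]
        exact le_sSup ⟨b, hGU hb, rfl⟩
      exact hja.trans (le_sSup ⟨a, hao, rfl⟩)
    · apply sSup_le
      rintro _ ⟨a, ha, rfl⟩
      calc eA a = sSup {j | CJPrime j ∧ j ≤ eA a} := hCj (eA a)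
        _ ≤ sSup {j | CJPrime j ∧ f j ≤ o} :=
          sSup_le_sSup fun j hj => ⟨hj.1, (hf hj.2).trans ha⟩
  have hGex : ∀ G : Finset B, ↑G ⊆ (⋃ o ∈ 𝒪, U o) → ∃ o ∈ 𝒪, eB (G.sup id) ≤ o := by
    intro G
    induction G using Finset.cons_induction with
    | empty =>
      intro _
      obtain ⟨o0, ho0⟩ := h𝒪dir.1
      exact ⟨o0, ho0, by simp [hceB.map_bot]⟩
    | cons b G hb ih =>
      intro hsub
      obtain ⟨o1, ho1, hG1⟩ := ih fun c hc => hsub (by simp [hc])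
      obtain ⟨o2, ho2, hbU⟩ : ∃ o ∈ 𝒪, b ∈ U o := by
        simpa using hsub (by simp)
      obtain ⟨z, hz, h2z, h1z⟩ := h𝒪dir.2 o2 ho2 o1 ho1
      refine ⟨z, hz, ?_⟩
      rw [Finset.sup_cons, hceB.map_sup]
      refine sup_le ?_ (hG1.trans h1z)
      have : eB b ≤ sSup (eB '' U o2) := le_sSup (Set.mem_image_of_mem eB hbU)
      exact (this.trans (hU o2 ho2).ge).trans h2z
  have hmain : bsq f (sSup 𝒪) = sSup (bsq f '' 𝒪) := by
    apply le_antisymm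
    · apply sSup_le
      rintro j ⟨hj, hjo⟩
      have hle : f j ≤ sSup (eB '' ⋃ o ∈ 𝒪, U o) := by
        refine hjo.trans (sSup_le fun o ho => ?_)
        exact (hU o ho).le.trans
          (sSup_le_sSup (Set.image_mono (Set.subset_biUnion_of_mem ho)))
      obtain ⟨a, hja, G, hGU, hfa⟩ := key_closed' hceA hceB hf hfcE hcl hj _ hle
      obtain ⟨o, ho, hGo⟩ := hGex G hGU
      have hjbo : j ≤ bsq f o :=
        le_sSup ⟨hj, ((hf hja).trans hfa).trans hGo⟩
      exact hjbo.trans (le_sSup (Set.mem_image_of_mem _ ho))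
    · apply sSup_le
      rintro _ ⟨o, ho, rfl⟩
      show sSup {j | CJPrime j ∧ f j ≤ o} ≤ sSup {j | CJPrime j ∧ f j ≤ sSup 𝒪}
      exact sSup_le_sSup fun j hj => ⟨hj.1, hj.2.trans (le_sSup ho)⟩
  exact ⟨hmain, 𝒪, subset_rfl, h𝒪dir, rfl,
    fun o ho => ⟨{a | f (eA a) ≤ o}, hopen o ho⟩, rfl⟩
end

section
/- Conditional Esakia lemma, second half: under the standing hypotheses on g, let 𝒞 be a down-directed family of closed elements of D with sInf 𝒞 ≤ g(⊤). Then ◆_g(sInf 𝒞) = sInf { ◆_g(c) | c ∈ 𝒞 }. Moreover there exists a down-directed subfamily 𝒞' ⊆ 𝒞 such that sInf 𝒞' = sInf 𝒞, ◆_g(c) is closed in C for every c ∈ 𝒞', and sInf { ◆_g(c) | c ∈ 𝒞' } = sInf { ◆_g(c) | c ∈ 𝒞 }. (Proposition 4.11(2).) -/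
section MyHelpers

open Finset in
private lemma myCE.e_mono {A C : Type*} [DistribLattice A] [BoundedOrder A]
    [CompleteLattice C] {e : A → C} (hce : IsCanonicalExtension e) :
    Monotone e := by
  intro a b hab
  have h : a ⊔ b = b := sup_eq_right.2 hab
  have h2 := hce.map_sup a b
  rw [h] at h2
  exact h2 ▸ le_sup_left

private lemma myCE.e_finsup {A C : Type*} [DistribLattice A] [BoundedOrder A]
    [CompleteLattice C] {e : A → C} (hce : IsCanonicalExtension e)
    {ι : Type*} (G : Finset ι) (f : ι → A) :
    e (G.sup f) = G.sup (fun t => e (f t)) := by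
  classical
  induction G using Finset.induction_on with
  | empty => simpa using hce.map_bot
  | insert _ _ hb ih => rw [Finset.sup_insert, Finset.sup_insert, hce.map_sup, ih]

private lemma myCE.e_fininf {A C : Type*} [DistribLattice A] [BoundedOrder A]
    [CompleteLattice C] {e : A → C} (hce : IsCanonicalExtension e)
    {ι : Type*} (G : Finset ι) (f : ι → A) :
    e (G.inf f) = G.inf (fun t => e (f t)) := by
  classical
  induction G using Finset.induction_on with
  | empty => simpa using hce.map_top
  | insert _ _ hb ih => rw [Finset.inf_insert, Finset.inf_insert, hce.map_inf, ih]

private lemma myCE.sInf_image_coe {A C : Type*} [CompleteLattice C]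
    (e : A → C) (F : Finset A) : sInf (e '' ↑F) = F.inf e := by
  classical
  induction F using Finset.induction_on with
  | empty => simp
  | insert _ _ hb ih => simp [Set.image_insert_eq, ih]

/-- Completely meet-prime elements of a canonical extension are open. -/
private lemma myCE.cmprime_open {A C : Type*} [DistribLattice A] [BoundedOrder A]
    [CompleteLattice C] {e : A → C} (hce : IsCanonicalExtension e)
    {m : C} (hm : CMPrime m) : OpenElem e m := by
  obtain ⟨𝒮, h𝒮⟩ := hce.dense_meetOfJoins m
  obtain ⟨x, hx, hxm⟩ := hm.2 _ (le_of_eq h𝒮.symm)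
  obtain ⟨S, hS, rfl⟩ := hx
  exact ⟨S, le_antisymm (h𝒮 ▸ sInf_le ⟨S, hS, rfl⟩) hxm⟩

private lemma myCE.bdiam_mono {C D : Type*} [CompleteLattice C] [CompleteLattice D]
    (g : C → D) {v w : D} (hvw : v ≤ w) : bdiam g v ≤ bdiam g w :=
  sInf_le_sInf (fun m hm => ⟨hm.1, le_trans hvw hm.2⟩)

/-- Down-directed families have lower bounds below finitely many upper elements. -/
private lemma myCE.dd_finset_lb {B D : Type*} [CompleteLattice D] (eB : B → D)
    (𝒞 : Set D) (h : DownDir 𝒞) (F : Finset B) :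
    (∀ b ∈ F, ∃ c ∈ 𝒞, c ≤ eB b) → ∃ c ∈ 𝒞, ∀ b ∈ F, c ≤ eB b := by
  classical
  induction F using Finset.induction_on with
  | empty =>
    intro _
    obtain ⟨c, hc⟩ := h.1
    exact ⟨c, hc, by simp⟩
  | @insert b F hb ih =>
    intro hbd
    obtain ⟨c1, hc1, hc1le⟩ := ih (fun b' hb' => hbd b' (Finset.mem_insert_of_mem hb'))
    obtain ⟨c2, hc2, hc2le⟩ := hbd b (Finset.mem_insert_self _ _)
    obtain ⟨z, hz, hz1, hz2⟩ := h.2 c1 hc1 c2 hc2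
    refine ⟨z, hz, fun b' hb' => ?_⟩
    rcases Finset.mem_insert.1 hb' with rfl | hb'
    · exact le_trans hz2 hc2le
    · exact le_trans hz1 (hc1le b' hb')

/-- Key compactness lemma. -/
private lemma myCE.key {A B C D : Type*} [DistribLattice A] [BoundedOrder A]
    [DistribLattice B] [BoundedOrder B] [CompleteLattice C] [CompleteLattice D]
    {eA : A → C} {eB : B → D}
    (hceA : IsCanonicalExtension eA) (hceB : IsCanonicalExtension eB)
    {g : C → D} (hg : Monotone g) (hgoE : OpenEsakia eA g)
    (hop : ∀ a : A, OpenElem eB (g (eA a)))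
    (S : Set B) (m : C) (hm : CMPrime m) (hle : sInf (eB '' S) ≤ g m) :
    ∃ F : Finset B, ↑F ⊆ S ∧ ∃ a : A, eB (F.inf id) ≤ g (eA a) ∧ eA a ≤ m := by
  classical
  obtain ⟨T, hT⟩ := myCE.cmprime_open hceA hm
  set T' : Set A := {a | ∃ F : Finset A, ↑F ⊆ T ∧ a = F.sup id} with hT'
  set O : Set C := eA '' T' with hO
  have hT'le : ∀ a ∈ T', eA a ≤ m := by
    rintro a ⟨F, hFT, rfl⟩
    rw [hT]
    rw [show eA (F.sup id) = F.sup (fun t => eA (id t)) from myCE.e_finsup hceA F id]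
    exact Finset.sup_le fun t ht => le_sSup ⟨t, hFT ht, rfl⟩
  have hO_sup : sSup O = m := by
    apply le_antisymm
    · exact sSup_le (by rintro _ ⟨a, ha, rfl⟩; exact hT'le a ha)
    · rw [hT]
      apply sSup_le
      rintro _ ⟨t, ht, rfl⟩
      refine le_sSup ⟨t, ⟨{t}, by simpa using ht, by simp⟩, rfl⟩
  have hO_updir : UpDir O := by
    constructor
    · exact ⟨eA ((∅ : Finset A).sup id), ⟨_, ⟨∅, by simp⟩, rfl⟩⟩
    · rintro _ ⟨a, ⟨F1, hF1, rfl⟩, rfl⟩ _ ⟨b, ⟨F2, hF2, rfl⟩, rfl⟩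
      refine ⟨eA ((F1 ∪ F2).sup id), ⟨_, ⟨F1 ∪ F2,
        by rw [Finset.coe_union]; exact Set.union_subset hF1 hF2, rfl⟩, rfl⟩,
        myCE.e_mono hceA (Finset.sup_mono Finset.subset_union_left),
        myCE.e_mono hceA (Finset.sup_mono Finset.subset_union_right)⟩
  have hO_open : ∀ o ∈ O, OpenElem eA o := by
    rintro _ ⟨a, _, rfl⟩
    exact ⟨{a}, by simp⟩
  have hgm : g m = sSup (g '' O) := by rw [← hO_sup]; exact hgoE O hO_updir hO_open
  choose Tmap hTmap using hop
  set U : Set B := ⋃ a ∈ T', Tmap a with hU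
  have hUsup : sSup (eB '' U) = g m := by
    rw [hgm]
    apply le_antisymm
    · apply sSup_le
      rintro _ ⟨t, ht, rfl⟩
      obtain ⟨a, ha, hta⟩ := Set.mem_iUnion₂.1 ht
      have h1 : eB t ≤ g (eA a) := by
        rw [hTmap a]; exact le_sSup ⟨t, hta, rfl⟩
      exact h1.trans (le_sSup ⟨eA a, ⟨a, ha, rfl⟩, rfl⟩)
    · apply sSup_le
      rintro _ ⟨_, ⟨a, ha, rfl⟩, rfl⟩
      rw [hTmap a]
      refine sSup_le_sSup (Set.image_mono ?_)
      intro t ht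
      exact Set.mem_iUnion₂.2 ⟨a, ha, ht⟩
  obtain ⟨F, hFS, G, hGU, hFG⟩ := hceB.compact S U (by rw [hUsup]; exact hle)
  have hGex : ∀ t ∈ G, ∃ a, a ∈ T' ∧ t ∈ Tmap a := by
    intro t ht
    obtain ⟨a, ha, hta⟩ := Set.mem_iUnion₂.1 (hGU ht)
    exact ⟨a, ha, hta⟩
  set f : B → A := fun t => if h : ∃ a, a ∈ T' ∧ t ∈ Tmap a then h.choose else ⊥ with hf
  have hf1 : ∀ t ∈ G, f t ∈ T' ∧ t ∈ Tmap (f t) := by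
    intro t ht
    have h := hGex t ht
    simp only [hf, dif_pos h]
    exact h.choose_spec
  refine ⟨F, hFS, G.sup f, ?_, ?_⟩
  · calc eB (F.inf id) ≤ eB (G.sup id) := myCE.e_mono hceB hFG
      _ = G.sup (fun t => eB (id t)) := myCE.e_finsup hceB G id
      _ ≤ g (eA (G.sup f)) := by
        apply Finset.sup_le
        intro t ht
        have h1 : eB t ≤ g (eA (f t)) := by
          rw [hTmap (f t)]; exact le_sSup ⟨t, (hf1 t ht).2, rfl⟩
        exact h1.trans (hg (myCE.e_mono hceA (Finset.le_sup (f := f) ht)))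
  · rw [myCE.e_finsup hceA G f]
    exact Finset.sup_le fun t ht => hT'le _ (hf1 t ht).1

/-- For closed `c`, `bdiam g c` is the closed element `⋀ eA '' {a | c ≤ g (eA a)}`. -/
private lemma myCE.bdiam_closed_eq {A B C D : Type*} [DistribLattice A] [BoundedOrder A]
    [DistribLattice B] [BoundedOrder B] [CompleteLattice C] [CompleteLattice D]
    {eA : A → C} {eB : B → D}
    (hceA : IsCanonicalExtension eA) (hceB : IsCanonicalExtension eB)
    (hCm : MeetPerfect C)
    {g : C → D} (hg : Monotone g) (hgoE : OpenEsakia eA g)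
    (hop : ∀ a : A, OpenElem eB (g (eA a)))
    {c : D} (hc : ClosedElem eB c) :
    bdiam g c = sInf (eA '' {a | c ≤ g (eA a)}) := by
  obtain ⟨S, rfl⟩ := hc
  apply le_antisymm
  · apply le_sInf
    rintro _ ⟨a, ha, rfl⟩
    rw [hCm (eA a)]
    apply le_sInf
    rintro m ⟨hmp, hle⟩
    exact sInf_le ⟨hmp, le_trans ha (hg hle)⟩
  · apply le_sInf
    rintro m ⟨hmp, hcm⟩
    obtain ⟨F, hFS, a, hFa, ham⟩ := myCE.key hceA hceB hg hgoE hop S m hmp hcm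
    have hcF : sInf (eB '' S) ≤ eB (F.inf id) := by
      rw [myCE.e_fininf hceB F id]
      exact Finset.le_inf fun b hb => sInf_le ⟨b, hFS hb, rfl⟩
    exact le_trans (sInf_le ⟨a, le_trans hcF hFa, rfl⟩) ham

end MyHelpers

/-- Proposition 4.11(2), conditional Esakia lemma (second half). -/
theorem stmt14 {A B C D : Type*} [DistribLattice A] [BoundedOrder A]
    [DistribLattice B] [BoundedOrder B] [CompleteLattice C] [CompleteLattice D]
    (eA : A → C) (eB : B → D)
    (hceA : IsCanonicalExtension eA) (hceB : IsCanonicalExtension eB)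
    (hCj : JoinPerfect C) (hCm : MeetPerfect C)
    (hDj : JoinPerfect D) (hDm : MeetPerfect D)
    (g : C → D) (hg : Monotone g)
    (hgcE : ClosedEsakia eA g) (hgoE : OpenEsakia eA g)
    (hop : ∀ a : A, OpenElem eB (g (eA a)))
    (hmul : ∀ a b : A, g (eA a) ⊓ g (eA b) ≤ g (eA (a ⊓ b)))
    (𝒞 : Set D) (h𝒞dir : DownDir 𝒞) (h𝒞cl : ∀ c ∈ 𝒞, ClosedElem eB c)
    (htop : sInf 𝒞 ≤ g ⊤) :
    bdiam g (sInf 𝒞) = sInf (bdiam g '' 𝒞) ∧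
    ∃ 𝒞' ⊆ 𝒞, DownDir 𝒞' ∧ sInf 𝒞' = sInf 𝒞 ∧
      (∀ c ∈ 𝒞', ClosedElem eA (bdiam g c)) ∧
      sInf (bdiam g '' 𝒞') = sInf (bdiam g '' 𝒞) := by
  classical
  have key1 : ∀ m : C, CMPrime m → sInf 𝒞 ≤ g m → ∃ c ∈ 𝒞, c ≤ g m := by
    intro m hmp hle
    choose Sc hSc using h𝒞cl
    set S : Set B := ⋃ c ∈ 𝒞, ⋃ (hc : c ∈ 𝒞), Sc c hc with hS
    have hSle : sInf (eB '' S) ≤ g m := by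
      refine le_trans (le_sInf ?_) hle
      intro c hc
      rw [hSc c hc]
      refine sInf_le_sInf (Set.image_mono ?_)
      intro b hb
      exact Set.mem_iUnion₂.2 ⟨c, hc, Set.mem_iUnion.2 ⟨hc, hb⟩⟩
    obtain ⟨F, hFS, a, hFa, ham⟩ := myCE.key hceA hceB hg hgoE hop S m hmp hSle
    obtain ⟨c, hc, hcle⟩ := myCE.dd_finset_lb eB 𝒞 h𝒞dir F (by
      intro b hb
      obtain ⟨c, hc, hb'⟩ := Set.mem_iUnion₂.1 (hFS hb)
      obtain ⟨hc', hb''⟩ := Set.mem_iUnion.1 hb'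
      refine ⟨c, hc, ?_⟩
      rw [hSc c hc']
      exact sInf_le ⟨b, hb'', rfl⟩)
    refine ⟨c, hc, ?_⟩
    have : c ≤ eB (F.inf id) := by
      rw [myCE.e_fininf hceB F id]
      exact Finset.le_inf fun b hb => hcle b hb
    exact this.trans (hFa.trans (hg ham))
  have heq : bdiam g (sInf 𝒞) = sInf (bdiam g '' 𝒞) := by
    apply le_antisymm
    · apply le_sInf
      rintro _ ⟨c, hc, rfl⟩
      exact myCE.bdiam_mono g (sInf_le hc)
    · apply le_sInf
      rintro m ⟨hmp, hle⟩
      obtain ⟨c, hc, hcm⟩ := key1 m hmp hle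
      exact le_trans (sInf_le ⟨c, hc, rfl⟩) (sInf_le ⟨hmp, hcm⟩)
  exact ⟨heq, 𝒞, subset_rfl, h𝒞dir, rfl,
    fun c hc => ⟨_, myCE.bdiam_closed_eq hceA hceB hCm hg hgoE hop (h𝒞cl c hc)⟩, rfl⟩
end

section
/- Validity of the canonical pseudo-correspondent (order-theoretic form of Proposition 3.6): let (C, e) be a canonical extension of a bounded distributive lattice A with C join-perfect and meet-perfect, and let f : C → C be monotone, closed Esakia and open Esakia, with f(e a) closed in C for every a ∈ A and f(e (a ⊔ b)) ≤ f(e a) ⊔ f(e b) for all a, b ∈ A. Then for every completely meet-prime element m of C, if f(⊥) ≤ m then f(■_f(m)) ≤ m. -/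
lemma einf_aux {A C : Type*} [DistribLattice A] [BoundedOrder A] [CompleteLattice C]
    (e : A → C) (hce : IsCanonicalExtension e) (F : Finset A) :
    e (F.inf id) = sInf (e '' ↑F) := by
  induction F using Finset.cons_induction with
  | empty => simp [hce.map_top]
  | cons a F ha ih =>
      rw [Finset.inf_cons, hce.map_inf, ih]
      simp [Finset.coe_cons, Set.image_insert_eq]

/-- Order-theoretic form of Proposition 3.6: the canonical pseudo-correspondent
holds on the canonical extension: for every completely meet-prime `m`,
if `f ⊥ ≤ m` then `f (■_f m) ≤ m`. -/
theorem stmt15 {A C : Type*} [DistribLattice A] [BoundedOrder A] [CompleteLattice C]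
    (e : A → C) (hce : IsCanonicalExtension e)
    (hCj : JoinPerfect C) (hCm : MeetPerfect C)
    (f : C → C) (hf : Monotone f)
    (hfcE : ClosedEsakia e f) (hfoE : OpenEsakia e f)
    (hcl : ∀ a : A, ClosedElem e (f (e a)))
    (hadd : ∀ a b : A, f (e (a ⊔ b)) ≤ f (e a) ⊔ f (e b)) :
    ∀ m : C, CMPrime m → f ⊥ ≤ m → f (bsq f m) ≤ m := by
  classical
  intro m hm hbot
  set O : Set C := e '' {a | f (e a) ≤ m} with hO
  have hOup : UpDir O := by
    constructor
    · exact ⟨e ⊥, ⟨⊥, by simpa [hce.map_bot] using hbot, rfl⟩⟩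
    · rintro x ⟨a, ha, rfl⟩ y ⟨b, hb, rfl⟩
      refine ⟨e (a ⊔ b), ⟨a ⊔ b, le_trans (hadd a b) (sup_le ha hb), rfl⟩, ?_, ?_⟩
      · rw [hce.map_sup]; exact le_sup_left
      · rw [hce.map_sup]; exact le_sup_right
  have hOopen : ∀ o ∈ O, OpenElem e o := by
    rintro x ⟨a, _, rfl⟩
    exact ⟨{a}, by simp⟩
  have hfO : f (sSup O) ≤ m := by
    rw [hfoE O hOup hOopen]
    apply sSup_le
    rintro x ⟨_, ⟨a, ha, rfl⟩, rfl⟩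
    exact ha
  have key : ∀ j : C, CJPrime j → f j ≤ m → j ≤ sSup O := by
    intro j hj hfj
    obtain ⟨S, hS⟩ : ClosedElem e j := by
      obtain ⟨𝒮, h𝒮⟩ := hce.dense_joinOfMeets j
      obtain ⟨c, hc, hjc⟩ := hj.2 _ h𝒮.le
      obtain ⟨S, hSmem, rfl⟩ := hc
      refine ⟨S, le_antisymm hjc ?_⟩
      rw [h𝒮]; exact le_sSup ⟨S, hSmem, rfl⟩
    set 𝒞 : Set C := {x | ∃ F : Finset A, ↑F ⊆ S ∧ x = e (F.inf id)} with h𝒞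
    have hdd : DownDir 𝒞 := by
      constructor
      · exact ⟨e ((∅ : Finset A).inf id), ∅, by simp, rfl⟩
      · rintro x ⟨F, hF, rfl⟩ y ⟨G, hG, rfl⟩
        refine ⟨e ((F ∪ G).inf id), ⟨F ∪ G, by
          rw [Finset.coe_union]; exact Set.union_subset hF hG, rfl⟩, ?_, ?_⟩
        · rw [einf_aux e hce, einf_aux e hce]
          exact sInf_le_sInf (Set.image_mono (by exact_mod_cast Finset.subset_union_left))
        · rw [einf_aux e hce, einf_aux e hce]
          exact sInf_le_sInf (Set.image_mono (by exact_mod_cast Finset.subset_union_right))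
    have hcl𝒞 : ∀ c ∈ 𝒞, ClosedElem e c := by
      rintro x ⟨F, hF, rfl⟩
      exact ⟨↑F, einf_aux e hce F⟩
    have hinf : sInf 𝒞 = sInf (e '' S) := by
      apply le_antisymm
      · apply le_sInf
        rintro y ⟨a, ha, rfl⟩
        have : e (({a} : Finset A).inf id) ∈ 𝒞 := ⟨{a}, by simpa using ha, rfl⟩
        simpa using sInf_le this
      · apply le_sInf
        rintro x ⟨F, hF, rfl⟩
        rw [einf_aux e hce]
        exact sInf_le_sInf (Set.image_mono hF)
    have hfj' : sInf (f '' 𝒞) ≤ m := by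
      rw [← hfcE 𝒞 hdd hcl𝒞, hinf, ← hS]; exact hfj
    obtain ⟨y, ⟨x, hx, rfl⟩, hym⟩ := hm.2 _ hfj'
    obtain ⟨F, hF, rfl⟩ := hx
    have hjx : j ≤ e (F.inf id) := by
      rw [hS, einf_aux e hce]
      exact sInf_le_sInf (Set.image_mono hF)
    exact le_trans hjx (le_sSup ⟨F.inf id, hym, rfl⟩)
  have hb : bsq f m ≤ sSup O := by
    apply sSup_le
    rintro j ⟨hj, hfj⟩
    exact key j hj hfj
  exact le_trans (hf hb) hfO
end

section
/- Order-theoretic form of Proposition 3.8: let B be a complete lattice which is both join-perfect and meet-perfect, and let π : B → B be a monotone map such that for every completely meet-prime element m of B, π(⊥) ≤ m implies π(■_π(m)) ≤ m. Then π(u) = π(⊥) ⊔ ◇_π(u) for every u ∈ B, and consequently π(u ⊔ v) ≤ π(u) ⊔ π(v) for all u, v ∈ B (indeed π is completely additive: it preserves all nonempty suprema). -/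
/-- Order-theoretic form of Proposition 3.8: if `π` validates the
pseudo-correspondent on a join- and meet-perfect complete lattice, then
`π u = π ⊥ ⊔ ◇_π u` for all `u`; hence `π` is (completely) additive. -/
theorem stmt17 {B : Type*} [CompleteLattice B]
    (hBj : JoinPerfect B) (hBm : MeetPerfect B)
    (π : B → B) (hπ : Monotone π)
    (hpc : ∀ m : B, CMPrime m → π ⊥ ≤ m → π (bsq π m) ≤ m) :
    (∀ u : B, π u = π ⊥ ⊔ diam π u) ∧
    (∀ u v : B, π (u ⊔ v) ≤ π u ⊔ π v) ∧
    (∀ S : Set B, S.Nonempty → π (sSup S) = sSup (π '' S)) := by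
  have key : ∀ u : B, π u = π ⊥ ⊔ diam π u := by
    intro u
    apply le_antisymm
    · rw [hBm (π ⊥ ⊔ diam π u)]
      apply le_sInf
      rintro m ⟨hm, hle⟩
      have hb : π ⊥ ≤ m := le_trans le_sup_left hle
      have hd : diam π u ≤ m := le_trans le_sup_right hle
      have hu : u ≤ bsq π m := by
        conv_lhs => rw [hBj u]
        apply sSup_le_sSup
        rintro j ⟨hj, hju⟩
        refine ⟨hj, le_trans (le_sSup ?_) hd⟩
        exact ⟨j, ⟨hj, hju⟩, rfl⟩
      exact le_trans (hπ hu) (hpc m hm hb)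
    · apply sup_le (hπ bot_le)
      apply sSup_le
      rintro x ⟨j, ⟨hj, hju⟩, rfl⟩
      exact hπ hju
  have add : ∀ S : Set B, S.Nonempty → π (sSup S) = sSup (π '' S) := by
    intro S hS
    rw [key]
    apply le_antisymm
    · apply sup_le
      · obtain ⟨s, hs⟩ := hS
        exact le_trans (hπ bot_le) (le_sSup ⟨s, hs, rfl⟩)
      · apply sSup_le
        rintro x ⟨j, ⟨hj, hjS⟩, rfl⟩
        obtain ⟨s, hsS, hjs⟩ := hj.2 S hjS
        exact le_trans (hπ hjs) (le_sSup ⟨s, hsS, rfl⟩)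
    · apply sSup_le
      rintro x ⟨s, hsS, rfl⟩
      calc π s = π ⊥ ⊔ diam π s := key s
        _ ≤ π ⊥ ⊔ diam π (sSup S) := by
            apply sup_le_sup_left
            apply sSup_le_sSup
            apply Set.image_mono
            rintro j ⟨hj, hjs⟩
            exact ⟨hj, le_trans hjs (le_sSup hsS)⟩
  refine ⟨key, fun u v => ?_, add⟩
  have h1 : π (u ⊔ v) = sSup (π '' {u, v}) := by
    rw [← sSup_pair]; exact add _ ⟨u, Set.mem_insert _ _⟩
  rw [h1, Set.image_pair, sSup_pair]
end
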